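/- arXiv:math/0607781 — 6 statements merged into one kernel-verified Lean document; each statement's English description precedes it below -/
import Mathlib

section
/- Let λ' > 0, let i be a nonnegative integer, and let g : ℤ → ℝ satisfy g(j) = 0 for all j ≤ 0 and λ' g(j+1) − j g(j) = 1[j = i] − e^{−λ'} λ'^i / i! for all j ≥ 0 (i.e., g is the solution of the Stein equation for the Poisson distribution Po(λ') and the set A = {i}). Then ∑_{k ∈ ℤ} |Δg(k)| ≤ 2/λ' and ∑_{k ∈ ℤ} (Δg(k))² ≤ 4/λ'², where Δg(k) := g(k+1) − g(k). -/
open Finset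

namespace PoissonSteinAux

noncomputable def S (lam : ℝ) (n : ℕ) : ℝ := ∑ k ∈ range n, lam ^ k / (Nat.factorial k)

noncomputable def T (lam : ℝ) (n : ℕ) : ℝ := ∑' m : ℕ, lam ^ (m + n) / (Nat.factorial (m + n))

lemma summable_T (lam : ℝ) (n : ℕ) :
    Summable (fun m : ℕ => lam ^ (m + n) / (Nat.factorial (m + n))) :=
  (summable_nat_add_iff n).2 (Real.summable_pow_div_factorial lam)

lemma S_nonneg {lam : ℝ} (hlam : 0 < lam) (n : ℕ) : 0 ≤ S lam n := by
  unfold S; positivity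

lemma T_nonneg {lam : ℝ} (hlam : 0 < lam) (n : ℕ) : 0 ≤ T lam n := by
  unfold T
  exact tsum_nonneg fun m => by positivity

lemma S_add_T (lam : ℝ) (n : ℕ) : S lam n + T lam n = Real.exp lam := by
  have h := Summable.sum_add_tsum_nat_add n (Real.summable_pow_div_factorial lam)
  have he : Real.exp lam = ∑' m : ℕ, lam ^ m / (Nat.factorial m) := by
    rw [Real.exp_eq_exp_ℝ, NormedSpace.exp_eq_tsum_div]
  rw [he, ← h]
  rfl

lemma I1 {lam : ℝ} (hlam : 0 < lam) (n : ℕ) :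
    lam * S lam n ≤ n * S lam (n + 1) := by
  unfold S
  rw [Finset.mul_sum, Finset.mul_sum]
  rw [Finset.sum_range_succ' (fun k => (n : ℝ) * (lam ^ k / (Nat.factorial k)))]
  have h1 : ∀ k ∈ range n, lam * (lam ^ k / (Nat.factorial k))
      ≤ (n : ℝ) * (lam ^ (k + 1) / (Nat.factorial (k + 1))) := by
    intro k hk
    have hk' : (k : ℝ) + 1 ≤ n := by
      have := Finset.mem_range.mp hk
      exact_mod_cast this
    have hfac : (Nat.factorial (k + 1) : ℝ) = (k + 1) * Nat.factorial k := by
      push_cast [Nat.factorial_succ]; ring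
    rw [hfac]
    have e1 : lam * (lam ^ k / (Nat.factorial k)) = lam ^ (k+1) / (Nat.factorial k) := by
      rw [pow_succ]; ring
    have e2 : (n:ℝ) * (lam ^ (k+1) / (((k:ℝ)+1) * Nat.factorial k))
        = ((n:ℝ) * lam ^ (k+1)) / (((k:ℝ)+1) * Nat.factorial k) := by ring
    rw [e1, e2, div_le_div_iff₀ (by positivity) (by positivity)]
    have hp : (0:ℝ) ≤ lam ^ (k+1) := by positivity
    have hf : (0:ℝ) < Nat.factorial k := by positivity
    nlinarith [mul_nonneg (mul_nonneg (sub_nonneg.2 hk') hp) hf.le]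
  calc ∑ k ∈ range n, lam * (lam ^ k / (Nat.factorial k))
      ≤ ∑ k ∈ range n, (n : ℝ) * (lam ^ (k+1) / (Nat.factorial (k+1))) := Finset.sum_le_sum h1
    _ ≤ ∑ k ∈ range n, (n : ℝ) * (lam ^ (k+1) / (Nat.factorial (k+1)))
        + (n : ℝ) * (lam ^ 0 / (Nat.factorial 0)) := by
        have : (0:ℝ) ≤ (n : ℝ) * (lam ^ 0 / (Nat.factorial 0)) := by positivity
        linarith

lemma I2 {lam : ℝ} (hlam : 0 < lam) (n : ℕ) :
    (n : ℝ) * T lam (n + 1) ≤ lam * T lam n := by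
  unfold T
  rw [← tsum_mul_left, ← tsum_mul_left]
  refine Summable.tsum_le_tsum ?_ ((summable_T lam (n+1)).mul_left _) ((summable_T lam n).mul_left _)
  intro m
  have hfac : (Nat.factorial (m + (n+1)) : ℝ) = (m + n + 1) * Nat.factorial (m + n) := by
    have : m + (n + 1) = (m + n) + 1 := by ring
    rw [this]
    push_cast [Nat.factorial_succ]; ring
  have hpow : lam ^ (m + (n + 1)) = lam * lam ^ (m + n) := by
    rw [show m + (n+1) = (m+n)+1 by ring, pow_succ]; ring
  rw [hfac, hpow]
  have hfpos : (0:ℝ) < Nat.factorial (m + n) := by positivity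
  have hle : (n : ℝ) ≤ (m:ℝ) + n + 1 := by
    have : (0:ℝ) ≤ (m:ℝ) := Nat.cast_nonneg m
    linarith
  have e1 : (n:ℝ) * (lam * lam ^ (m+n) / (((m:ℝ) + n + 1) * Nat.factorial (m+n)))
      = ((n:ℝ) * (lam * lam ^ (m+n))) / (((m:ℝ) + n + 1) * Nat.factorial (m+n)) := by ring
  have e2 : lam * (lam ^ (m+n) / (Nat.factorial (m+n)))
      = (lam * lam ^ (m+n)) / (Nat.factorial (m+n)) := by ring
  rw [e1, e2, div_le_div_iff₀ (by positivity) (by positivity)]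
  have hp : (0:ℝ) ≤ lam * lam ^ (m+n) := by positivity
  have hm : (0:ℝ) ≤ ((m:ℝ)+1) := by positivity
  nlinarith [mul_nonneg (mul_nonneg hm hp) hfpos.le]

end PoissonSteinAux

open MeasureTheory ProbabilityTheory PoissonSteinAux

set_option maxHeartbeats 1000000 in
/-- Lemma 3.7: bounds on the sums of `|Δg|` and `(Δg)²` for the solution `g` of the
Stein equation for the Poisson distribution `Po(λ')` and the singleton set `{i}`. -/
theorem poisson_stein_solution_delta_sums
    (lam : ℝ) (hlam : 0 < lam) (i : ℕ) (g : ℤ → ℝ)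
    (hg0 : ∀ j : ℤ, j ≤ 0 → g j = 0)
    (hstein : ∀ j : ℤ, 0 ≤ j →
      lam * g (j + 1) - j * g j =
        (if j = (i : ℤ) then 1 else 0) - Real.exp (-lam) * lam ^ i / (Nat.factorial i)) :
    (∑' k : ℤ, |g (k + 1) - g k|) ≤ 2 / lam ∧
      (∑' k : ℤ, (g (k + 1) - g k) ^ 2) ≤ 4 / lam ^ 2 := by
  classical
  have hlam' : lam ≠ 0 := ne_of_gt hlam
  set q := Real.exp (-lam) with hqdef
  have hq0 : 0 < q := Real.exp_pos _
  set p : ℝ := q * lam ^ i / (Nat.factorial i) with hpdef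
  set G : ℕ → ℝ := fun n => (Nat.factorial n : ℝ) / lam ^ (n+1) *
      ((if i ≤ n then lam ^ i / (Nat.factorial i : ℝ) else 0) - p * S lam (n+1)) with hGdef
  have hfac_ne : ∀ m : ℕ, ((Nat.factorial m : ℝ)) ≠ 0 :=
    fun m => Nat.cast_ne_zero.2 (Nat.factorial_ne_zero m)
  have hg1 : ∀ n : ℕ, g ((n : ℤ) + 1) = G n := by
    intro n
    induction n with
    | zero =>
      have h0 := hstein 0 le_rfl
      rw [hg0 0 le_rfl] at h0
      have hS1 : S lam 1 = 1 := by simp [S]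
      have hif : (if (0:ℤ) = (i:ℤ) then (1:ℝ) else 0)
          = (if i ≤ 0 then lam ^ i / (Nat.factorial i : ℝ) else 0) := by
        by_cases hi : i = 0 <;> simp [hi, Nat.le_zero, eq_comm]
      have hG0 : lam * G 0 = (if (0:ℤ) = (i:ℤ) then (1:ℝ) else 0) - p := by
        simp only [hGdef, hS1, hif, Nat.factorial_zero, Nat.cast_one, pow_one]
        field_simp
        ring
      have h0' : lam * g ((0:ℤ) + 1) = (if (0:ℤ) = (i:ℤ) then (1:ℝ) else 0) - p := by
        rw [← h0]; push_cast; ring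
      have : lam * g ((0:ℤ)+1) = lam * G 0 := by rw [h0', hG0]
      have := mul_left_cancel₀ hlam' this
      simpa using this
    | succ n ih =>
      have h1 := hstein ((n:ℤ)+1) (by positivity)
      rw [ih] at h1
      have hSsucc : S lam (n+2) = S lam (n+1) + lam^(n+1) / (Nat.factorial (n+1) : ℝ) :=
        Finset.sum_range_succ _ _
      have hif : (if ((n:ℤ)+1) = (i:ℤ) then (1:ℝ) else 0)
          = (if i = n+1 then 1 else 0) := by
        by_cases h : i = n + 1 <;> simp [h] <;> omega
      have hkey : lam * G (n+1) - ((n:ℝ)+1) * G n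
          = (if i = n+1 then (1:ℝ) else 0) - p := by
        simp only [hGdef, hSsucc]
        rcases lt_trichotomy i (n+1) with h|h|h
        · have h1' : i ≤ n := by omega
          have h2' : i ≤ n + 1 := by omega
          have h3' : i ≠ n + 1 := by omega
          simp only [if_pos h1', if_pos h2', if_neg h3']
          have hfs : (Nat.factorial (n+1) : ℝ) = ((n:ℝ)+1) * (Nat.factorial n : ℝ) := by
            push_cast [Nat.factorial_succ]; ring
          rw [hfs, hpdef]
          field_simp
          ring
        · have h1' : ¬ i ≤ n := by omega
          have h2' : i ≤ n + 1 := by omega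
          simp only [if_pos h2', if_neg h1', if_pos h.symm, h]
          simp only [le_refl, Nat.not_succ_le_self, ↓reduceIte]
          have hfs : (Nat.factorial (n+1) : ℝ) = ((n:ℝ)+1) * (Nat.factorial n : ℝ) := by
            push_cast [Nat.factorial_succ]; ring
          rw [hfs, hpdef]
          field_simp
          ring
        · have h1' : ¬ i ≤ n := by omega
          have h2' : ¬ i ≤ n + 1 := by omega
          have h3' : i ≠ n + 1 := by omega
          simp only [if_neg h1', if_neg h2', if_neg h3']
          have hfs : (Nat.factorial (n+1) : ℝ) = ((n:ℝ)+1) * (Nat.factorial n : ℝ) := by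
            push_cast [Nat.factorial_succ]; ring
          rw [hfs, hpdef]
          field_simp
          ring
      have h1' : lam * g (((n:ℤ)+1) + 1) = lam * G (n+1) := by
        rw [hif, ← hkey] at h1
        push_cast at h1 ⊢
        linarith [h1]
      have := mul_left_cancel₀ hlam' h1'
      rw [show ((n+1 : ℕ) : ℤ) = (n:ℤ)+1 by push_cast; ring]
      exact this
  -- basic facts
  have hqST : ∀ m : ℕ, q * (S lam m + T lam m) = 1 := by
    intro m
    rw [S_add_T, hqdef, ← Real.exp_add]
    simp
  have hSnn : ∀ m, 0 ≤ S lam m := S_nonneg hlam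
  have hTnn : ∀ m, 0 ≤ T lam m := T_nonneg hlam
  have hGge : ∀ n : ℕ, i ≤ n → G n =
      ((Nat.factorial n : ℝ) * lam ^ i / ((Nat.factorial i : ℝ) * lam ^ (n+1)))
        * (q * T lam (n+1)) := by
    intro n h
    have hT' : q * T lam (n+1) = 1 - q * S lam (n+1) := by
      linear_combination hqST (n+1)
    simp only [hGdef, if_pos h, hpdef]
    rw [hT']
    field_simp
  have hGlt : ∀ n : ℕ, n < i → G n =
      -(((Nat.factorial n : ℝ) * lam ^ i / ((Nat.factorial i : ℝ) * lam ^ (n+1)))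
        * (q * S lam (n+1))) := by
    intro n h
    have h' : ¬ i ≤ n := by omega
    simp only [hGdef, if_neg h', hpdef]
    field_simp
    ring
  have hGge_nonneg : ∀ n : ℕ, i ≤ n → 0 ≤ G n := by
    intro n h
    rw [hGge n h]
    have := hTnn (n+1)
    positivity
  -- step inequalities
  have hfs : ∀ n : ℕ, (Nat.factorial (n+1) : ℝ) = ((n:ℝ)+1) * (Nat.factorial n : ℝ) := by
    intro n; push_cast [Nat.factorial_succ]; ring
  have hstep_lt : ∀ n : ℕ, n + 1 < i → G (n+1) ≤ G n := by
    intro n h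
    set C : ℝ := (Nat.factorial n : ℝ) * lam ^ i * q / ((Nat.factorial i : ℝ) * lam ^ (n+2))
      with hCdef
    have hC : 0 ≤ C := by rw [hCdef]; positivity
    have e1 : G (n+1) = -(C * (((n:ℝ)+1) * S lam (n+2))) := by
      rw [hGlt (n+1) h, hfs n, hCdef]
      field_simp
    have e2 : G n = -(C * (lam * S lam (n+1))) := by
      rw [hGlt n (by omega), hCdef]
      field_simp
      ring
    rw [e1, e2]
    have := mul_le_mul_of_nonneg_left (I1 hlam (n+1)) hC
    push_cast at this ⊢
    linarith
  have hstep_gt : ∀ n : ℕ, i ≤ n → G (n+1) ≤ G n := by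
    intro n h
    set C : ℝ := (Nat.factorial n : ℝ) * lam ^ i * q / ((Nat.factorial i : ℝ) * lam ^ (n+2))
      with hCdef
    have hC : 0 ≤ C := by rw [hCdef]; positivity
    have e1 : G (n+1) = C * (((n:ℝ)+1) * T lam (n+2)) := by
      rw [hGge (n+1) (by omega), hfs n, hCdef]
      field_simp
    have e2 : G n = C * (lam * T lam (n+1)) := by
      rw [hGge n h, hCdef]
      field_simp
      ring
    rw [e1, e2]
    have := mul_le_mul_of_nonneg_left (I2 hlam (n+1)) hC
    push_cast at this ⊢
    linarith
  -- the increments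
  set d : ℕ → ℝ := fun n => g ((n:ℤ)+1) - g (n:ℤ) with hddef
  have hgnat : ∀ n : ℕ, g ((n+1 : ℕ) : ℤ) = G n := by
    intro n
    rw [show ((n+1 : ℕ) : ℤ) = (n:ℤ)+1 by push_cast; ring]
    exact hg1 n
  have hd0 : d 0 = G 0 := by
    simp only [hddef]
    rw [hg0 ((0:ℕ):ℤ) (by norm_num)]
    have := hg1 0
    push_cast at this ⊢
    linarith
  have hdsucc : ∀ n : ℕ, d (n+1) = G (n+1) - G n := by
    intro n
    simp only [hddef]
    rw [hg1 (n+1), hgnat n]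
  have hd_nonpos : ∀ n : ℕ, n ≠ i → d n ≤ 0 := by
    intro n hn
    cases n with
    | zero =>
      rw [hd0, hGlt 0 (by omega)]
      have h1 : 0 ≤ ((Nat.factorial 0 : ℝ) * lam ^ i / ((Nat.factorial i : ℝ) * lam ^ (0+1)))
          * (q * S lam (0+1)) := by
        have := hSnn 1
        positivity
      linarith
    | succ n =>
      rw [hdsucc n, sub_nonpos]
      rcases lt_or_ge (n+1) i with h | h
      · exact hstep_lt n h
      · exact hstep_gt n (by omega)
  -- bounds at i
  have hdi_nonneg : 0 ≤ d i := by
    cases i with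
    | zero =>
      rw [hd0, hGge 0 le_rfl]
      have := hTnn 1
      positivity
    | succ m =>
      rw [hdsucc m]
      have h1 : 0 ≤ G (m+1) := hGge_nonneg (m+1) le_rfl
      have h2 : G m ≤ 0 := by
        rw [hGlt m (by omega)]
        have := hSnn (m+1)
        have : 0 ≤ ((Nat.factorial m : ℝ) * lam ^ (m+1) / ((Nat.factorial (m+1) : ℝ) * lam ^ (m+1)))
            * (q * S lam (m+1)) := by
          have := hSnn (m+1)
          positivity
        linarith
      linarith
  have hdi_le : d i ≤ 1 / lam := by
    cases i with
    | zero =>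
      rw [hd0, hGge 0 le_rfl]
      have hqT : q * T lam 1 ≤ 1 := by
        have h1 := hqST 1
        have h2 : 0 ≤ q * S lam 1 := mul_nonneg hq0.le (hSnn 1)
        nlinarith
      have e0 : ((Nat.factorial 0 : ℝ) * lam ^ 0 / ((Nat.factorial 0 : ℝ) * lam ^ (0+1)))
          * (q * T lam (0+1)) = (q * T lam 1) / lam := by
        simp [Nat.factorial_zero]
        ring
      rw [e0]
      rw [div_le_div_iff₀ hlam hlam]
      nlinarith [hTnn 1]
    | succ m =>
      rw [hdsucc m]
      have e1 : G (m+1) - G m =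
          (q * (((m:ℝ)+1) * T lam (m+2)) + q * (lam * S lam (m+1))) / (((m:ℝ)+1) * lam) := by
        rw [hGge (m+1) le_rfl, hGlt m (by omega), hfs m]
        field_simp
        ring
      rw [e1]
      rw [div_le_div_iff₀ (by positivity) hlam]
      have key : q * (lam * S lam (m+1)) ≤ q * (((m:ℝ)+1) * S lam (m+2)) := by
        refine mul_le_mul_of_nonneg_left ?_ hq0.le
        have := I1 hlam (m+1)
        push_cast at this
        linarith
      have h1 := hqST (m+2)
      have f1 : q * (lam * S lam (m+1)) * lam ≤ q * (((m:ℝ)+1) * S lam (m+2)) * lam :=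
        mul_le_mul_of_nonneg_right key hlam.le
      have f2 : lam * ((m:ℝ)+1) * (q * (S lam (m+2) + T lam (m+2))) = lam * ((m:ℝ)+1) := by
        rw [h1, mul_one]
      calc (q * (((m:ℝ)+1) * T lam (m+2)) + q * (lam * S lam (m+1))) * lam
          = q * (((m:ℝ)+1) * T lam (m+2)) * lam + q * (lam * S lam (m+1)) * lam := by ring
        _ ≤ q * (((m:ℝ)+1) * T lam (m+2)) * lam + q * (((m:ℝ)+1) * S lam (m+2)) * lam := by
            linarith [f1]
        _ = lam * ((m:ℝ)+1) * (q * (S lam (m+2) + T lam (m+2))) := by ring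
        _ = lam * ((m:ℝ)+1) := f2
        _ = 1 * (((m:ℝ)+1) * lam) := by ring
  -- telescoping and summability
  have telescope : ∀ N : ℕ, ∑ n ∈ Finset.range N, d n = g (N:ℤ) := by
    intro N
    have h1 : ∀ n : ℕ, d n = g (((n+1:ℕ)):ℤ) - g ((n:ℕ):ℤ) := by
      intro n
      simp only [hddef]
      rw [show (((n+1:ℕ)):ℤ) = (n:ℤ)+1 by push_cast; ring]
    calc ∑ n ∈ Finset.range N, d n
        = ∑ n ∈ Finset.range N, (g (((n+1:ℕ)):ℤ) - g ((n:ℕ):ℤ)) :=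
          Finset.sum_congr rfl fun n _ => h1 n
      _ = g ((N:ℕ):ℤ) - g ((0:ℕ):ℤ) := Finset.sum_range_sub (fun n => g ((n:ℕ):ℤ)) N
      _ = g (N:ℤ) := by rw [hg0 ((0:ℕ):ℤ) (by norm_num)]; simp
  have hgN_nonneg : ∀ N : ℕ, i + 1 ≤ N → 0 ≤ g (N:ℤ) := by
    intro N hN
    cases N with
    | zero => omega
    | succ m =>
      rw [hgnat m]
      exact hGge_nonneg m (by omega)
  set e : ℕ → ℝ := fun n => if n = i then 0 else -(d n) with hedef
  have he0 : ∀ n, 0 ≤ e n := by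
    intro n
    simp only [hedef]
    by_cases h : n = i
    · simp [h]
    · simp only [if_neg h]
      linarith [hd_nonpos n h]
  have hesum : ∀ N : ℕ, ∑ n ∈ Finset.range N, e n ≤ d i := by
    intro N
    set M := max N (i+1) with hMdef
    have h1 : ∑ n ∈ Finset.range N, e n ≤ ∑ n ∈ Finset.range M, e n :=
      Finset.sum_le_sum_of_subset_of_nonneg
        (Finset.range_subset_range.2 (le_max_left _ _)) (fun n _ _ => he0 n)
    have hiM : i ∈ Finset.range M := Finset.mem_range.2 (by omega)
    have h2 : ∑ n ∈ Finset.range M, e n = d i - g (M:ℤ) := by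
      have hsplit : ∀ n, e n = -(d n) + (if n = i then d i else 0) := by
        intro n
        by_cases h : n = i <;> simp [hedef, h]
      rw [Finset.sum_congr rfl (fun n _ => hsplit n), Finset.sum_add_distrib,
        Finset.sum_ite_eq' (Finset.range M) i (fun _ => d i), if_pos hiM,
        Finset.sum_neg_distrib, telescope M]
      ring
    have h3 : 0 ≤ g (M:ℤ) := hgN_nonneg M (le_max_right _ _)
    linarith
  have summable_e : Summable e := summable_of_sum_range_le he0 hesum
  have tsum_e_le : (∑' n, e n) ≤ d i := Real.tsum_le_of_sum_range_le he0 hesum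
  have habs : ∀ n : ℕ, |d n| = e n + (if n = i then d i else 0) := by
    intro n
    by_cases h : n = i
    · subst h
      simp [hedef, abs_of_nonneg hdi_nonneg]
    · simp only [hedef, if_neg h, add_zero]
      exact abs_of_nonpos (hd_nonpos n h)
  have hsing : Summable (fun n : ℕ => if n = i then d i else 0) :=
    summable_of_ne_finset_zero (s := {i}) (fun n hn => if_neg (by simpa using hn))
  have habs_summable : Summable (fun n : ℕ => |d n|) :=
    (summable_e.add hsing).congr fun n => (habs n).symm
  have htsum_abs : (∑' n : ℕ, |d n|) = (∑' n, e n) + d i := by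
    rw [tsum_congr habs, Summable.tsum_add summable_e hsing, tsum_ite_eq]
  have bound1 : (∑' n : ℕ, |d n|) ≤ 2 / lam := by
    calc (∑' n : ℕ, |d n|) = (∑' n, e n) + d i := htsum_abs
      _ ≤ d i + d i := add_le_add tsum_e_le le_rfl
      _ ≤ 1/lam + 1/lam := add_le_add hdi_le hdi_le
      _ = 2/lam := by ring
  have hbd : ∀ n : ℕ, |d n| ≤ 1 / lam := by
    intro n
    by_cases h : n = i
    · subst h; rw [abs_of_nonneg hdi_nonneg]; exact hdi_le
    · rw [habs n, if_neg h, add_zero]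
      have h1 : e n ≤ ∑' m, e m := Summable.le_tsum summable_e n (fun m _ => he0 m)
      exact le_trans h1 (le_trans tsum_e_le hdi_le)
  have hsq_le : ∀ n : ℕ, (d n) ^ 2 ≤ (1/lam) * |d n| := by
    intro n
    rw [← sq_abs, sq]
    exact mul_le_mul_of_nonneg_right (hbd n) (abs_nonneg _)
  have hsq_summable : Summable (fun n : ℕ => (d n) ^ 2) :=
    Summable.of_nonneg_of_le (fun n => sq_nonneg _) hsq_le (habs_summable.mul_left (1/lam))
  have bound2 : (∑' n : ℕ, (d n) ^ 2) ≤ 4 / lam ^ 2 := by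
    have h1 : (∑' n : ℕ, (d n) ^ 2) ≤ ∑' n : ℕ, (1/lam) * |d n| :=
      Summable.tsum_le_tsum hsq_le hsq_summable (habs_summable.mul_left (1/lam))
    rw [tsum_mul_left] at h1
    have h2 : (1/lam) * (∑' n : ℕ, |d n|) ≤ (1/lam) * (2/lam) :=
      mul_le_mul_of_nonneg_left bound1 (by positivity)
    have h3 : (1/lam) * (2/lam) ≤ 4 / lam ^ 2 := by
      have hx : (1/lam) * (2/lam) = 2 / lam ^ 2 := by
        rw [pow_two]
        field_simp
      rw [hx, div_le_div_iff₀ (by positivity) (by positivity)]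
      nlinarith [pow_pos hlam 2]
    linarith
  -- transfer from ℕ to ℤ
  have hDneg : ∀ n : ℕ, g ((-((n:ℤ)+1)) + 1) - g (-((n:ℤ)+1)) = 0 := by
    intro n
    rw [hg0 ((-((n:ℤ)+1)) + 1) (by omega), hg0 (-((n:ℤ)+1)) (by omega)]
    ring
  constructor
  · have h1 : HasSum (fun n : ℕ => |g (((n:ℤ)) + 1) - g ((n:ℤ))|) (∑' n : ℕ, |d n|) := by
      have := habs_summable.hasSum
      simpa [hddef] using this
    have h2 : HasSum (fun n : ℕ => |g ((-((n:ℤ)+1)) + 1) - g (-((n:ℤ)+1))|) 0 := by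
      have : (fun n : ℕ => |g ((-((n:ℤ)+1)) + 1) - g (-((n:ℤ)+1))|) = fun _ => (0:ℝ) :=
        funext fun n => by rw [hDneg n, abs_zero]
      rw [this]
      exact hasSum_zero
    have h3 := HasSum.of_nat_of_neg_add_one
      (f := fun k : ℤ => |g (k + 1) - g k|) h1 h2
    rw [h3.tsum_eq, add_zero]
    exact bound1
  · have h1 : HasSum (fun n : ℕ => (g (((n:ℤ)) + 1) - g ((n:ℤ))) ^ 2) (∑' n : ℕ, (d n) ^ 2) := by
      have := hsq_summable.hasSum
      simpa [hddef] using this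
    have h2 : HasSum (fun n : ℕ => (g ((-((n:ℤ)+1)) + 1) - g (-((n:ℤ)+1))) ^ 2) 0 := by
      have : (fun n : ℕ => (g ((-((n:ℤ)+1)) + 1) - g (-((n:ℤ)+1))) ^ 2) = fun _ => (0:ℝ) :=
        funext fun n => by rw [hDneg n]; ring
      rw [this]
      exact hasSum_zero
    have h3 := HasSum.of_nat_of_neg_add_one
      (f := fun k : ℤ => (g (k + 1) - g k) ^ 2) h1 h2
    rw [h3.tsum_eq, add_zero]
    exact bound2
end

section
/- For any integer-valued random variable W with E W = μ and Var W = σ² ∈ (0, ∞), it holds that max_{k ∈ ℤ} P[W = k] ≤ d_TV(L(W), TP(μ, σ²)) + 1/(2.3 σ). -/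
open MeasureTheory ProbabilityTheory

/-- Point probabilities of the translated Poisson distribution `TP(μ, σ²)`:
the law of `⌊μ - σ²⌋ + Z` where `Z ~ Po(σ² + γ)` and `γ = ⟨μ - σ²⟩`. -/
noncomputable def tpPMF (μ σ2 : ℝ) (k : ℤ) : ℝ :=
  if 0 ≤ k - ⌊μ - σ2⌋ then
    Real.exp (-(σ2 + Int.fract (μ - σ2))) * (σ2 + Int.fract (μ - σ2)) ^ (k - ⌊μ - σ2⌋).toNat /
      (Nat.factorial (k - ⌊μ - σ2⌋).toNat)
  else 0

/-- The translated Poisson distribution `TP(μ, σ²)` as a measure on `ℤ`. -/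
noncomputable def TP (μ σ2 : ℝ) : Measure ℤ :=
  Measure.sum (fun k : ℤ => ENNReal.ofReal (tpPMF μ σ2 k) • Measure.dirac k)

/-- Total variation distance between two measures on `ℤ`. -/
noncomputable def dTV (P Q : Measure ℤ) : ℝ :=
  ⨆ A : Set ℤ, |(P A).toReal - (Q A).toReal|

/-! ### Auxiliary analytic lemmas -/

lemma mode_bound {l c : ℝ} (hl : 0 < l) (hc : 0 < c) :
    l ^ c * Real.exp (-l) ≤ c ^ c * Real.exp (-c) := by
  rw [Real.rpow_def_of_pos hl, Real.rpow_def_of_pos hc, ← Real.exp_add, ← Real.exp_add]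
  apply Real.exp_le_exp.2
  have h := Real.log_le_sub_one_of_pos (div_pos hl hc)
  rw [Real.log_div (ne_of_gt hl) (ne_of_gt hc)] at h
  have h2 : c * (Real.log l - Real.log c) ≤ c * (l / c - 1) :=
    mul_le_mul_of_nonneg_left h hc.le
  have h3 : c * (l / c) = l := by field_simp
  nlinarith [h2, h3]

lemma rpow_split {x : ℝ} (hx : 0 < x) (n : ℕ) :
    x ^ ((n : ℝ) + 1 / 2) = x ^ n * Real.sqrt x := by
  rw [Real.rpow_add hx, Real.rpow_natCast, Real.sqrt_eq_rpow]

lemma sq_le_of_sq {a b : ℝ} (hb : 0 ≤ b) (h : a ^ 2 ≤ b ^ 2) : a ≤ b := by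
  nlinarith [sq_nonneg (a - b), sq_nonneg (a + b)]

/-- Stirling lower bound: `√(2πn) (n/e)^n ≤ n!` for `n ≥ 1`. -/
lemma stirling_lb (n : ℕ) (hn : n ≠ 0) :
    Real.sqrt Real.pi * (Real.sqrt (2 * (n : ℝ)) * ((n : ℝ) / Real.exp 1) ^ n) ≤
      (Nat.factorial n : ℝ) := by
  obtain ⟨m, rfl⟩ := Nat.exists_eq_succ_of_ne_zero hn
  have htend : Filter.Tendsto (Stirling.stirlingSeq ∘ Nat.succ) Filter.atTop
      (nhds (Real.sqrt Real.pi)) :=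
    Stirling.tendsto_stirlingSeq_sqrt_pi.comp (Filter.tendsto_add_atTop_nat 1)
  have h1 : Real.sqrt Real.pi ≤ Stirling.stirlingSeq (m + 1) :=
    Stirling.stirlingSeq'_antitone.le_of_tendsto htend m
  have hd : 0 < Real.sqrt (2 * (m + 1 : ℕ)) * (((m + 1 : ℕ) : ℝ) / Real.exp 1) ^ (m + 1) := by
    have : (0:ℝ) < ((m + 1 : ℕ) : ℝ) := by positivity
    positivity
  rw [Stirling.stirlingSeq, le_div_iff₀ hd] at h1
  simpa [Nat.succ_eq_add_one] using h1

lemma numcase (n : ℕ) (c : ℝ) (hc : c = (n : ℝ) + 1 / 2) (F : ℝ) (hF : 0 < F)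
    (h : 5.29 * c ^ (2 * n) * c ≤ F ^ 2 * Real.exp 1 ^ (2 * n + 1)) :
    2.3 * (c ^ n * Real.sqrt c) * Real.exp (-c) ≤ F := by
  have hcpos : 0 < c := by rw [hc]; positivity
  rw [Real.exp_neg, mul_inv_le_iff₀ (Real.exp_pos c)]
  apply sq_le_of_sq (by positivity)
  have hs : Real.sqrt c ^ 2 = c := Real.sq_sqrt hcpos.le
  have he : Real.exp c ^ 2 = Real.exp 1 ^ (2 * n + 1) := by
    rw [← Real.exp_nat_mul, ← Real.exp_nat_mul]
    congr 1
    rw [hc]; push_cast; ring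
  calc (2.3 * (c ^ n * Real.sqrt c)) ^ 2
      = 5.29 * c ^ (2 * n) * (Real.sqrt c ^ 2) := by ring
    _ = 5.29 * c ^ (2 * n) * c := by rw [hs]
    _ ≤ F ^ 2 * Real.exp 1 ^ (2 * n + 1) := h
    _ = (F * Real.exp c) ^ 2 := by rw [← he]; ring

lemma key_big (n : ℕ) (hn : 3 ≤ n) :
    2.3 * (((n : ℝ) + 1 / 2) ^ n * Real.sqrt ((n : ℝ) + 1 / 2)) *
      Real.exp (-((n : ℝ) + 1 / 2)) ≤ (Nat.factorial n : ℝ) := by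
  set N : ℝ := (n : ℝ) with hN
  have hN3 : (3 : ℝ) ≤ N := by rw [hN]; exact_mod_cast hn
  have hNpos : (0 : ℝ) < N := by linarith
  have e1 : N + 1 / 2 ≤ N * Real.exp (1 / (2 * N)) := by
    have h := Real.add_one_le_exp (1 / (2 * N))
    have h2 : N * (1 / (2 * N) + 1) ≤ N * Real.exp (1 / (2 * N)) :=
      mul_le_mul_of_nonneg_left h hNpos.le
    have h3 : N * (1 / (2 * N) + 1) = N + 1 / 2 := by field_simp; ring
    linarith
  have e2 : (N + 1 / 2) ^ n ≤ N ^ n * Real.exp (1 / 2) := by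
    have h := pow_le_pow_left₀ (by positivity) e1 n
    rwa [mul_pow, ← Real.exp_nat_mul,
      show (n : ℝ) * (1 / (2 * N)) = 1 / 2 by rw [← hN]; field_simp] at h
  have e3 : 2.3 * Real.sqrt (N + 1 / 2) ≤ Real.sqrt Real.pi * Real.sqrt (2 * N) := by
    rw [show (2.3 : ℝ) = Real.sqrt 5.29 by
        rw [show (5.29 : ℝ) = 2.3 ^ 2 by norm_num, Real.sqrt_sq (by norm_num)],
      ← Real.sqrt_mul (by norm_num : (0:ℝ) ≤ 5.29), ← Real.sqrt_mul Real.pi_pos.le]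
    apply Real.sqrt_le_sqrt
    nlinarith [Real.pi_gt_d6]
  have e4 : (N / Real.exp 1) ^ n = N ^ n * Real.exp (-N) := by
    rw [div_pow, ← Real.exp_nat_mul, mul_one, Real.exp_neg, div_eq_mul_inv]
  have eexp : Real.exp (-(N + 1 / 2)) = Real.exp (-N) * Real.exp (-(1 / 2)) := by
    rw [← Real.exp_add]; ring_nf
  have h5 : Real.exp (1 / 2) * Real.exp (-(1 / 2)) = 1 := by
    rw [← Real.exp_add]; norm_num
  have hA : 2.3 * ((N + 1 / 2) ^ n * Real.sqrt (N + 1 / 2)) * Real.exp (-(N + 1 / 2))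
      = (2.3 * Real.sqrt (N + 1 / 2)) * (N + 1 / 2) ^ n * Real.exp (-N)
        * Real.exp (-(1 / 2)) := by
    rw [eexp]; ring
  rw [hA]
  calc (2.3 * Real.sqrt (N + 1 / 2)) * (N + 1 / 2) ^ n * Real.exp (-N) * Real.exp (-(1 / 2))
      ≤ (Real.sqrt Real.pi * Real.sqrt (2 * N)) * (N ^ n * Real.exp (1 / 2)) * Real.exp (-N)
        * Real.exp (-(1 / 2)) := by
        gcongr
    _ = Real.sqrt Real.pi * (Real.sqrt (2 * N) * (N / Real.exp 1) ^ n) := by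
        rw [e4]
        linear_combination (Real.sqrt Real.pi * Real.sqrt (2 * N) * N ^ n
          * Real.exp (-N)) * h5
    _ ≤ (Nat.factorial n : ℝ) := stirling_lb n (by omega)

lemma key (n : ℕ) :
    2.3 * (((n : ℝ) + 1 / 2) ^ n * Real.sqrt ((n : ℝ) + 1 / 2)) *
      Real.exp (-((n : ℝ) + 1 / 2)) ≤ (Nat.factorial n : ℝ) := by
  match n with
  | 0 =>
    apply numcase 0 _ (by norm_num) _ (by norm_num)
    have he := Real.exp_one_gt_d9
    norm_num [Nat.factorial]
    nlinarith [he]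
  | 1 =>
    apply numcase 1 _ (by norm_num) _ (by norm_num)
    have he := Real.exp_one_gt_d9
    have h3 : (2.7182818283 : ℝ) ^ 3 ≤ Real.exp 1 ^ 3 :=
      pow_le_pow_left₀ (by norm_num) he.le 3
    have hp : Real.exp 1 ^ 3 = Real.exp 3 := by
      rw [← Real.exp_nat_mul]; norm_num
    norm_num [Nat.factorial]
    nlinarith [h3, hp]
  | 2 =>
    apply numcase 2 _ (by norm_num) _ (by norm_num)
    have he := Real.exp_one_gt_d9
    have h5 : (2.7182818283 : ℝ) ^ 5 ≤ Real.exp 1 ^ 5 :=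
      pow_le_pow_left₀ (by norm_num) he.le 5
    have hp : Real.exp 1 ^ 5 = Real.exp 5 := by
      rw [← Real.exp_nat_mul]; norm_num
    norm_num [Nat.factorial]
    nlinarith [h5, hp]
  | (m + 3) => exact key_big (m + 3) (by omega)

lemma poisson_bound {l : ℝ} (hl : 0 < l) (n : ℕ) :
    Real.exp (-l) * l ^ n / (Nat.factorial n : ℝ) ≤ 1 / (2.3 * Real.sqrt l) := by
  have hfac : (0 : ℝ) < (Nat.factorial n : ℝ) := by exact_mod_cast Nat.factorial_pos n
  have hsl : (0 : ℝ) < 2.3 * Real.sqrt l := by positivity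
  rw [div_le_div_iff₀ hfac hsl, one_mul]
  have hc : (0 : ℝ) < (n : ℝ) + 1 / 2 := by positivity
  have h1 : l ^ n * Real.sqrt l * Real.exp (-l)
      ≤ ((n : ℝ) + 1 / 2) ^ n * Real.sqrt ((n : ℝ) + 1 / 2) * Real.exp (-((n : ℝ) + 1 / 2)) := by
    have h := mode_bound hl hc
    rwa [rpow_split hl n, rpow_split hc n] at h
  calc Real.exp (-l) * l ^ n * (2.3 * Real.sqrt l)
      = 2.3 * (l ^ n * Real.sqrt l * Real.exp (-l)) := by ring
    _ ≤ 2.3 * (((n : ℝ) + 1 / 2) ^ n * Real.sqrt ((n : ℝ) + 1 / 2)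
        * Real.exp (-((n : ℝ) + 1 / 2))) := by linarith
    _ = 2.3 * (((n : ℝ) + 1 / 2) ^ n * Real.sqrt ((n : ℝ) + 1 / 2))
        * Real.exp (-((n : ℝ) + 1 / 2)) := by ring
    _ ≤ (Nat.factorial n : ℝ) := key n

/-! ### Lemmas about `tpPMF` and `TP` -/

lemma tpPMF_nonneg {μ σ2 : ℝ} (hσ2 : 0 < σ2) (k : ℤ) : 0 ≤ tpPMF μ σ2 k := by
  rw [tpPMF]
  split
  · have h := Int.fract_nonneg (μ - σ2)
    apply div_nonneg (mul_nonneg (Real.exp_pos _).le (pow_nonneg (by linarith) _))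
    positivity
  · exact le_refl 0

lemma tpPMF_le {μ σ2 : ℝ} (hσ2 : 0 < σ2) (k : ℤ) :
    tpPMF μ σ2 k ≤ 1 / (2.3 * Real.sqrt σ2) := by
  have hs : 0 < Real.sqrt σ2 := Real.sqrt_pos.2 hσ2
  have hf := Int.fract_nonneg (μ - σ2)
  rw [tpPMF]
  split
  · have hlpos : 0 < σ2 + Int.fract (μ - σ2) := by linarith
    refine le_trans (poisson_bound hlpos _) ?_
    apply one_div_le_one_div_of_le (by positivity)
    have h : Real.sqrt σ2 ≤ Real.sqrt (σ2 + Int.fract (μ - σ2)) :=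
      Real.sqrt_le_sqrt (by linarith)
    nlinarith
  · positivity

lemma TP_singleton (μ σ2 : ℝ) (k : ℤ) :
    TP μ σ2 {k} = ENNReal.ofReal (tpPMF μ σ2 k) := by
  rw [TP, Measure.sum_apply _ (measurableSet_singleton k)]
  rw [tsum_eq_single k]
  · simp [Measure.smul_apply]
  · intro j hj
    simp [Measure.smul_apply, Measure.dirac_apply, Set.indicator, hj]

lemma TP_univ_le {μ σ2 : ℝ} (hσ2 : 0 < σ2) : TP μ σ2 Set.univ ≤ 1 := by
  rw [TP, Measure.sum_apply _ MeasurableSet.univ]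
  have hdir : ∀ k : ℤ, (ENNReal.ofReal (tpPMF μ σ2 k) • Measure.dirac k) Set.univ
      = ENNReal.ofReal (tpPMF μ σ2 k) := by
    intro k; simp [Measure.smul_apply]
  simp only [hdir]
  have hf := Int.fract_nonneg (μ - σ2)
  have hl0 : 0 ≤ σ2 + Int.fract (μ - σ2) := by linarith
  set m : ℤ := ⌊μ - σ2⌋ with hm
  set r : NNReal := ⟨σ2 + Int.fract (μ - σ2), hl0⟩ with hr
  have hinj : Function.Injective (fun n : ℕ => (n : ℤ) + m) := by
    intro a b hab; simpa using hab
  have hsupp : Function.support (fun k : ℤ => ENNReal.ofReal (tpPMF μ σ2 k))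
      ⊆ Set.range (fun n : ℕ => (n : ℤ) + m) := by
    intro k hk
    rcases lt_or_ge k m with h | h
    · exfalso
      apply hk
      have hneg : ¬ (0 ≤ k - ⌊μ - σ2⌋) := by rw [← hm]; omega
      simp [tpPMF, sub_nonneg.not.mp hneg]
    · exact ⟨(k - m).toNat, by simp; omega⟩
  rw [← Function.Injective.tsum_eq hinj hsupp]
  have hpmf : ∀ n : ℕ, tpPMF μ σ2 ((n : ℤ) + m) = poissonPMFReal r n := by
    intro n
    have h1 : ((n : ℤ) + m) - ⌊μ - σ2⌋ = (n : ℤ) := by rw [← hm]; ring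
    have h2 : (0 : ℤ) ≤ (n : ℤ) := by positivity
    rw [tpPMF, h1, if_pos h2]
    simp [poissonPMFReal, hr]
    change _ = Real.exp (-(σ2 + Int.fract (μ - σ2))) * (σ2 + Int.fract (μ - σ2)) ^ n / _
    rw [neg_add_rev]
  calc ∑' n : ℕ, ENNReal.ofReal (tpPMF μ σ2 ((n : ℤ) + m))
      = ∑' n : ℕ, ENNReal.ofReal (poissonPMFReal r n) := by
        exact tsum_congr fun n => by rw [hpmf]
    _ = ENNReal.ofReal (∑' n : ℕ, poissonPMFReal r n) :=
        (ENNReal.ofReal_tsum_of_nonneg (fun n => poissonPMFReal_nonneg)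
          (poissonPMFRealSum r).summable).symm
    _ = 1 := by rw [show (∑' n : ℕ, poissonPMFReal r n) = 1 from (poissonPMFRealSum r).tsum_eq]; norm_num
    _ ≤ 1 := le_refl 1

/-- Corollary 3.9: a bound on the maximal point probability of an integer-valued
random variable in terms of its translated Poisson approximation error. -/
theorem qmax_le_dTV_add
    {Ω : Type*} [MeasurableSpace Ω] (P : Measure Ω) [IsProbabilityMeasure P]
    (W : Ω → ℤ) (hW : Measurable W)
    (μ σ2 : ℝ) (hσ2 : 0 < σ2)
    (hL2 : MemLp (fun ω => (W ω : ℝ)) 2 P)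
    (hmean : ∫ ω, (W ω : ℝ) ∂P = μ)
    (hvar : variance (fun ω => (W ω : ℝ)) P = σ2) :
    (⨆ k : ℤ, (P {ω | W ω = k}).toReal) ≤
      dTV (Measure.map W P) (TP μ σ2) + 1 / (2.3 * Real.sqrt σ2) := by
  have hmap : IsProbabilityMeasure (Measure.map W P) :=
    Measure.isProbabilityMeasure_map hW.aemeasurable
  have hbdd : BddAbove (Set.range fun A : Set ℤ =>
      |((Measure.map W P) A).toReal - ((TP μ σ2) A).toReal|) := by
    refine ⟨1, ?_⟩
    rintro x ⟨A, rfl⟩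
    have h1 : ((Measure.map W P) A).toReal ≤ 1 := by
      have h := prob_le_one (μ := Measure.map W P) (s := A)
      have := ENNReal.toReal_mono ENNReal.one_ne_top h
      simpa using this
    have h2 : ((TP μ σ2) A).toReal ≤ 1 := by
      have h : (TP μ σ2) A ≤ 1 := le_trans (measure_mono (Set.subset_univ A)) (TP_univ_le hσ2)
      have := ENNReal.toReal_mono ENNReal.one_ne_top h
      simpa using this
    rw [abs_le]
    constructor <;>
      [linarith [ENNReal.toReal_nonneg (a := (Measure.map W P) A)];
       linarith [ENNReal.toReal_nonneg (a := (TP μ σ2) A)]]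
  apply ciSup_le
  intro k
  have hsup : |((Measure.map W P) {k}).toReal - ((TP μ σ2) {k}).toReal|
      ≤ dTV (Measure.map W P) (TP μ σ2) := le_ciSup hbdd ({k} : Set ℤ)
  have hPk : P {ω | W ω = k} = (Measure.map W P) {k} := by
    rw [Measure.map_apply hW (measurableSet_singleton k)]
    rfl
  have hTk : ((TP μ σ2) {k}).toReal = tpPMF μ σ2 k := by
    rw [TP_singleton, ENNReal.toReal_ofReal (tpPMF_nonneg hσ2 k)]
  have hle : tpPMF μ σ2 k ≤ 1 / (2.3 * Real.sqrt σ2) := tpPMF_le hσ2 k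
  have habs : ((Measure.map W P) {k}).toReal - ((TP μ σ2) {k}).toReal
      ≤ dTV (Measure.map W P) (TP μ σ2) := le_trans (le_abs_self _) hsup
  rw [hPk]
  rw [hTk] at habs
  linarith
end

section
/- Let (W, W') be an exchangeable pair of integer-valued random variables with E W = μ and Var W = σ² < ∞, suppose there exist 0 < λ < 1 and a random variable R with E[W' − μ | W] = (1 − λ)(W − μ) + R almost surely, and W' − W ∈ {−1, 0, +1} almost surely. Let q_max = max_{k ∈ ℤ} P[W = k]. Then E|W − μ|³ ≤ λ^{−1}(8 q_max + 1 + σ + E[|R| (W − μ)²]). -/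
open MeasureTheory ProbabilityTheory

private lemma key_step (x d : ℝ) (hd : d = -1 ∨ d = 0 ∨ d = 1) :
    d * ((x + d) * |x + d| - x * |x|) ≤ 2 * |x| + 1 := by
  rcases hd with h | h | h <;> subst h <;>
  · rcases abs_cases x with ⟨h1, h2⟩ | ⟨h1, h2⟩ <;>
      rcases abs_cases (x + (-1:ℝ)) with ⟨h3, h4⟩ | ⟨h3, h4⟩ <;>
      rcases abs_cases (x + (1:ℝ)) with ⟨h5, h6⟩ | ⟨h5, h6⟩ <;>
      nlinarith

/-- Lemma 3.13 (third moment bound): under the exchangeable-pair assumptions,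
`E|W - μ|³ ≤ λ⁻¹(8 q_max + 1 + σ + E[|R|(W - μ)²])`. -/
theorem third_moment_bound_exchangeable_pair
    {Ω : Type*} [MeasurableSpace Ω] (P : Measure Ω) [IsProbabilityMeasure P]
    (W W' : Ω → ℤ) (hW : Measurable W) (hW' : Measurable W')
    (μ σ2 : ℝ) (hσ2 : 0 < σ2)
    (hL2 : MemLp (fun ω => (W ω : ℝ)) 2 P)
    (hmean : ∫ ω, (W ω : ℝ) ∂P = μ)
    (hvar : variance (fun ω => (W ω : ℝ)) P = σ2)
    (hexch : Measure.map (fun ω => (W ω, W' ω)) P = Measure.map (fun ω => (W' ω, W ω)) P)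
    (lam : ℝ) (hlam0 : 0 < lam) (hlam1 : lam < 1)
    (R : Ω → ℝ)
    (hcond : P[(fun ω => (W' ω : ℝ) - μ) | MeasurableSpace.comap W ⊤] =ᵐ[P]
      fun ω => (1 - lam) * ((W ω : ℝ) - μ) + R ω)
    (hjump : ∀ᵐ ω ∂P, W' ω - W ω ∈ ({-1, 0, 1} : Set ℤ))
    (qmax : ℝ) (hqmax : qmax = ⨆ k : ℤ, (P {ω | W ω = k}).toReal) :
    (∫ ω, |(W ω : ℝ) - μ| ^ 3 ∂P) ≤
      lam⁻¹ * (8 * qmax + 1 + Real.sqrt σ2 + ∫ ω, |R ω| * ((W ω : ℝ) - μ) ^ 2 ∂P) := by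
  have hq0 : 0 ≤ qmax := by
    rw [hqmax]; exact Real.iSup_nonneg fun k => ENNReal.toReal_nonneg
  have hm : MeasurableSpace.comap W ⊤ ≤ ‹MeasurableSpace Ω› := hW.comap_le
  set f : Ω → ℝ := fun ω => (W ω : ℝ) - μ with hf_def
  set f' : Ω → ℝ := fun ω => (W' ω : ℝ) - μ with hf'_def
  set D : Ω → ℝ := fun ω => (W' ω : ℝ) - (W ω : ℝ) with hD_def
  set g : Ω → ℝ := fun ω => f ω * |f ω| with hg_def
  set g' : Ω → ℝ := fun ω => f' ω * |f' ω| with hg'_def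
  -- measurability
  have hcast : Measurable (Int.cast : ℤ → ℝ) := measurable_of_countable _
  have hWr : Measurable (fun ω => (W ω : ℝ)) := hcast.comp hW
  have hW'r : Measurable (fun ω => (W' ω : ℝ)) := hcast.comp hW'
  have hf_meas : Measurable f := hWr.sub measurable_const
  have hf'_meas : Measurable f' := hW'r.sub measurable_const
  have hD_meas : Measurable D := hW'r.sub hWr
  have hg_meas : Measurable g := hf_meas.mul hf_meas.abs
  have hg'_meas : Measurable g' := hf'_meas.mul hf'_meas.abs
  have hWmm : Measurable[MeasurableSpace.comap W ⊤] W :=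
    measurable_iff_comap_le.mpr le_rfl
  have hfm : Measurable[MeasurableSpace.comap W ⊤] f :=
    (hcast.comp hWmm).sub measurable_const
  have hgm : StronglyMeasurable[MeasurableSpace.comap W ⊤] g := by
    have hge : g = (fun k : ℤ => ((k : ℝ) - μ) * |(k : ℝ) - μ|) ∘ W := by
      funext ω; simp only [hg_def, hf_def, Function.comp_apply]
    rw [hge]
    exact ((measurable_of_countable _).comp hWmm).stronglyMeasurable
  -- jump bounds
  have hjump' : ∀ᵐ ω ∂P, D ω = -1 ∨ D ω = 0 ∨ D ω = 1 := by
    filter_upwards [hjump] with ω hω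
    have hc : ((W' ω - W ω : ℤ) : ℝ) = D ω := by push_cast [hD_def]; ring
    rcases hω with h | h | h
    · left; rw [← hc, h]; norm_num
    · right; left; rw [← hc, h]; norm_num
    · right; right; rw [← hc, h]; norm_num
  have hDbd : ∀ᵐ ω ∂P, |D ω| ≤ 1 := by
    filter_upwards [hjump'] with ω hω
    rcases hω with h | h | h <;> rw [h] <;> norm_num
  -- integrability basics
  have hfL2 : MemLp f 2 P := hL2.sub (memLp_const μ)
  have hf_int : Integrable f P := hfL2.integrable one_le_two
  have hf2_int : Integrable (fun ω => f ω ^ 2) P := hfL2.integrable_sq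
  have hEf2 : ∫ ω, f ω ^ 2 ∂P = σ2 := by
    have h := variance_eq_integral hL2.aemeasurable
    rw [hvar, hmean] at h
    exact h.symm
  have habsfL2 : MemLp (fun ω => |f ω|) 2 P := by
    simpa [Real.norm_eq_abs] using hfL2.norm
  have habsf : ∫ ω, |f ω| ∂P ≤ Real.sqrt σ2 := by
    have hvnn := variance_nonneg (fun ω => |f ω|) P
    rw [variance_eq_sub habsfL2] at hvnn
    have he : P[(fun ω => |f ω|) ^ 2] = σ2 := by
      rw [← hEf2]; congr 1; funext ω; simp [sq_abs]
    rw [he] at hvnn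
    have h0 : 0 ≤ ∫ ω, |f ω| ∂P := integral_nonneg fun ω => abs_nonneg _
    refine (Real.le_sqrt h0 hσ2.le).mpr ?_
    nlinarith [hvnn]
  have hf'_int : Integrable f' P := by
    refine Integrable.mono' (g := fun ω => |f ω| + 1) (hf_int.abs.add (integrable_const 1))
      hf'_meas.aestronglyMeasurable ?_
    filter_upwards [hDbd] with ω hω
    have hfd : f' ω = f ω + D ω := by simp only [hf_def, hf'_def, hD_def]; ring
    rw [Real.norm_eq_abs, hfd]
    calc |f ω + D ω| ≤ |f ω| + |D ω| := abs_add_le _ _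
      _ ≤ |f ω| + 1 := by linarith
  have hD_int : Integrable D P := by
    refine Integrable.mono' (g := fun _ => 1) (integrable_const 1)
      hD_meas.aestronglyMeasurable ?_
    filter_upwards [hDbd] with ω hω; rwa [Real.norm_eq_abs]
  have hgD_int : Integrable (fun ω => g ω * D ω) P := by
    refine Integrable.mono' (g := fun ω => f ω ^ 2) hf2_int
      (hg_meas.mul hD_meas).aestronglyMeasurable ?_
    filter_upwards [hDbd] with ω hω
    rw [Real.norm_eq_abs, abs_mul]
    calc abs (g ω) * |D ω| ≤ abs (g ω) * 1 :=
          mul_le_mul_of_nonneg_left hω (abs_nonneg _)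
      _ = f ω ^ 2 := by
          simp only [mul_one, hg_def, abs_mul, abs_abs, abs_mul_abs_self, pow_two]
  have hg'D_int : Integrable (fun ω => g' ω * D ω) P := by
    refine Integrable.mono' (g := fun ω => (|f ω| + 1) ^ 2) ?_
      (hg'_meas.mul hD_meas).aestronglyMeasurable ?_
    · exact (habsfL2.add (memLp_const 1)).integrable_sq
    · filter_upwards [hDbd] with ω hω
      have hfd : f' ω = f ω + D ω := by simp only [hf_def, hf'_def, hD_def]; ring
      have h1 : |f' ω| ≤ |f ω| + 1 := by
        rw [hfd]
        calc |f ω + D ω| ≤ |f ω| + |D ω| := abs_add_le _ _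
          _ ≤ |f ω| + 1 := by linarith
      rw [Real.norm_eq_abs, abs_mul, hg'_def, abs_mul, abs_abs]
      calc |f' ω| * |f' ω| * |D ω| ≤ |f' ω| * |f' ω| * 1 :=
            mul_le_mul_of_nonneg_left hω (by positivity)
        _ = |f' ω| * |f' ω| := mul_one _
        _ ≤ (|f ω| + 1) ^ 2 := by nlinarith [abs_nonneg (f' ω), abs_nonneg (f ω)]
  -- exchangeability: ∫ D * (g' + g) = 0
  have hswap : ∫ ω, D ω * (g' ω + g ω) ∂P = 0 := by
    set Φ : ℤ × ℤ → ℝ := fun p =>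
      (((p.2 : ℝ)) - ((p.1 : ℝ))) *
        ((((p.2 : ℝ) - μ) * |(p.2 : ℝ) - μ|) + (((p.1 : ℝ) - μ) * |(p.1 : ℝ) - μ|))
      with hΦ_def
    have hΦ : Measurable Φ := measurable_of_countable Φ
    have h1 : ∫ ω, Φ (W ω, W' ω) ∂P = ∫ ω, Φ (W' ω, W ω) ∂P := by
      rw [← integral_map (hW.prodMk hW').aemeasurable hΦ.aestronglyMeasurable, hexch,
        integral_map (hW'.prodMk hW).aemeasurable hΦ.aestronglyMeasurable]
    have h2 : ∀ ω, Φ (W' ω, W ω) = - Φ (W ω, W' ω) := by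
      intro ω; simp only [hΦ_def]; all_goals ring_nf
    have h3 : ∫ ω, Φ (W ω, W' ω) ∂P = 0 := by
      have h := h1
      simp_rw [h2, integral_neg] at h
      linarith
    have h4 : ∀ ω, Φ (W ω, W' ω) = D ω * (g' ω + g ω) := by
      intro ω
      simp only [hΦ_def, hD_def, hg_def, hg'_def, hf_def, hf'_def]
      all_goals ring_nf
    rw [← h3]
    all_goals exact integral_congr_ae (ae_of_all _ fun ω => (h4 ω).symm)
  have hBA : (∫ ω, g' ω * D ω ∂P) = - ∫ ω, g ω * D ω ∂P := by
    have h := hswap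
    have heq : ∫ ω, D ω * (g' ω + g ω) ∂P =
        (∫ ω, g' ω * D ω ∂P) + ∫ ω, g ω * D ω ∂P := by
      rw [← integral_add hg'D_int hgD_int]
      exact integral_congr_ae (ae_of_all _ fun ω => by ring)
    rw [heq] at h; linarith
  -- conditional expectation of D
  have hcondD : P[D | MeasurableSpace.comap W ⊤] =ᵐ[P] fun ω => -lam * f ω + R ω := by
    have h2 : P[f | MeasurableSpace.comap W ⊤] = f :=
      condExp_of_stronglyMeasurable hm hfm.stronglyMeasurable hf_int
    have hD_eq : D = f' - f := by
      funext ω; simp only [hD_def, hf_def, hf'_def, Pi.sub_apply]; ring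
    have h3 : P[D | MeasurableSpace.comap W ⊤] =ᵐ[P]
        P[f' | MeasurableSpace.comap W ⊤] - P[f | MeasurableSpace.comap W ⊤] := by
      rw [hD_eq]; exact condExp_sub hf'_int hf_int _
    refine h3.trans ?_
    rw [h2]
    filter_upwards [hcond] with ω hω
    simp only [Pi.sub_apply, hω, hf_def]
    ring
  have hbddD : ∀ᵐ ω ∂P, |(P[D | MeasurableSpace.comap W ⊤]) ω| ≤ 1 := by
    have h := ae_bdd_condExp_of_ae_bdd (m := MeasurableSpace.comap W ⊤) (μ := P) (f := D)
      (R := 1) (by simpa using hDbd)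
    simpa using h
  have hRbd : ∀ᵐ ω ∂P, |R ω| ≤ 1 + lam * |f ω| := by
    filter_upwards [hcondD, hbddD] with ω h1 h2
    have hr : R ω = (P[D | MeasurableSpace.comap W ⊤]) ω + lam * f ω := by rw [h1]; ring
    rw [hr]
    calc |(P[D | MeasurableSpace.comap W ⊤]) ω + lam * f ω|
        ≤ |(P[D | MeasurableSpace.comap W ⊤]) ω| + |lam * f ω| := abs_add_le _ _
      _ ≤ 1 + lam * |f ω| := by rw [abs_mul, abs_of_pos hlam0]; linarith
  have hR_aesm : AEStronglyMeasurable R P := by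
    refine AEStronglyMeasurable.congr
      (f := fun ω => (P[D | MeasurableSpace.comap W ⊤]) ω + lam * f ω) ?_ ?_
    · exact ((stronglyMeasurable_condExp.mono hm).aestronglyMeasurable).add
        ((hf_meas.const_mul lam).aestronglyMeasurable)
    · filter_upwards [hcondD] with ω h1
      rw [h1]; ring
  -- case split on integrability of |f|^3
  by_cases hint3 : Integrable (fun ω => |f ω| ^ 3) P
  case neg =>
    have hL : ∫ ω, |(W ω : ℝ) - μ| ^ 3 ∂P = 0 := integral_undef hint3
    rw [hL]
    have hI : 0 ≤ ∫ ω, |R ω| * ((W ω : ℝ) - μ) ^ 2 ∂P :=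
      integral_nonneg fun ω => mul_nonneg (abs_nonneg _) (sq_nonneg _)
    have hs : 0 ≤ Real.sqrt σ2 := Real.sqrt_nonneg _
    have : (0:ℝ) < lam⁻¹ := by positivity
    nlinarith
  case pos =>
  -- remaining integrabilities
  have hgf_eq : ∀ ω, g ω * f ω = |f ω| ^ 3 := by
    intro ω
    simp only [hg_def]
    rcases abs_cases (f ω) with ⟨h, _⟩ | ⟨h, _⟩ <;> rw [h] <;> ring
  have hgf_int : Integrable (fun ω => g ω * f ω) P :=
    hint3.congr (ae_of_all _ fun ω => (hgf_eq ω).symm)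
  have hgf_int' : ∫ ω, g ω * f ω ∂P = ∫ ω, |f ω| ^ 3 ∂P :=
    integral_congr_ae (ae_of_all _ fun ω => hgf_eq ω)
  have hbound_int : Integrable (fun ω => f ω ^ 2 + lam * |f ω| ^ 3) P :=
    hf2_int.add (hint3.const_mul lam)
  have hgR_int : Integrable (fun ω => g ω * R ω) P := by
    refine Integrable.mono' hbound_int
      (hg_meas.aestronglyMeasurable.mul hR_aesm) ?_
    filter_upwards [hRbd] with ω hω
    rw [Real.norm_eq_abs, abs_mul]
    have hgabs : abs (g ω) = |f ω| * |f ω| := by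
      rw [hg_def, abs_mul, abs_abs]
    rw [hgabs]
    calc |f ω| * |f ω| * |R ω| ≤ |f ω| * |f ω| * (1 + lam * |f ω|) :=
          mul_le_mul_of_nonneg_left hω (by positivity)
      _ = f ω ^ 2 + lam * |f ω| ^ 3 := by
          rcases abs_cases (f ω) with ⟨h, _⟩ | ⟨h, _⟩ <;> rw [h] <;> ring
  have hRf2_int : Integrable (fun ω => |R ω| * f ω ^ 2) P := by
    refine Integrable.mono' hbound_int
      ((continuous_abs.comp_aestronglyMeasurable hR_aesm).mul
        ((hf_meas.pow_const 2).aestronglyMeasurable)) ?_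
    filter_upwards [hRbd] with ω hω
    rw [Real.norm_eq_abs, abs_mul, abs_abs, abs_of_nonneg (sq_nonneg (f ω))]
    calc |R ω| * f ω ^ 2 ≤ (1 + lam * |f ω|) * f ω ^ 2 :=
          mul_le_mul_of_nonneg_right hω (sq_nonneg _)
      _ = f ω ^ 2 + lam * |f ω| ^ 3 := by
          rcases abs_cases (f ω) with ⟨h, _⟩ | ⟨h, _⟩ <;> rw [h] <;> ring
  -- compute A = ∫ g D
  have hA : ∫ ω, g ω * D ω ∂P =
      -lam * (∫ ω, |f ω| ^ 3 ∂P) + ∫ ω, g ω * R ω ∂P := by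
    have hgD_int' : Integrable (g * D) P := hgD_int
    have hpull : P[g * D | MeasurableSpace.comap W ⊤] =ᵐ[P]
        g * P[D | MeasurableSpace.comap W ⊤] :=
      condExp_mul_of_stronglyMeasurable_left hgm hgD_int' hD_int
    have h1 : ∫ ω, g ω * D ω ∂P = ∫ ω, (P[g * D | MeasurableSpace.comap W ⊤]) ω ∂P :=
      (integral_condExp hm).symm
    have h2 : ∫ ω, (P[g * D | MeasurableSpace.comap W ⊤]) ω ∂P
        = ∫ ω, g ω * (P[D | MeasurableSpace.comap W ⊤]) ω ∂P :=
      integral_congr_ae hpull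
    have h3 : ∫ ω, g ω * (P[D | MeasurableSpace.comap W ⊤]) ω ∂P
        = ∫ ω, (-lam * (g ω * f ω) + g ω * R ω) ∂P := by
      refine integral_congr_ae ?_
      filter_upwards [hcondD] with ω hω
      rw [hω]; ring
    rw [h1, h2, h3, integral_add ((hgf_int.const_mul (-lam))) hgR_int,
      integral_const_mul, hgf_int']
  -- the main inequality
  have hdiff : ∫ ω, (g' ω - g ω) * D ω ∂P ≤ 2 * Real.sqrt σ2 + 1 := by
    have hle : ∫ ω, (g' ω - g ω) * D ω ∂P ≤ ∫ ω, (2 * |f ω| + 1) ∂P := by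
      have hsub_int : Integrable (fun ω => (g' ω - g ω) * D ω) P := by
        refine (hg'D_int.sub hgD_int).congr (ae_of_all _ fun ω => ?_)
        simp only [Pi.sub_apply]
        ring
      refine integral_mono_ae hsub_int
        ((hf_int.abs.const_mul 2).add (integrable_const 1)) ?_
      filter_upwards [hjump'] with ω hω
      have hfd : f' ω = f ω + D ω := by simp only [hf_def, hf'_def, hD_def]; ring
      have hk := key_step (f ω) (D ω) hω
      calc (g' ω - g ω) * D ω
          = D ω * ((f ω + D ω) * |f ω + D ω| - f ω * |f ω|) := by
            simp only [hg'_def, hg_def]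
            rw [hfd]; ring
        _ ≤ 2 * |f ω| + 1 := hk
    have heq : ∫ ω, (2 * |f ω| + 1) ∂P = 2 * (∫ ω, |f ω| ∂P) + 1 := by
      rw [integral_add (hf_int.abs.const_mul 2) (integrable_const 1),
        integral_const_mul, integral_const]
      simp
    rw [heq] at hle
    linarith
  have hdiff_eq : ∫ ω, (g' ω - g ω) * D ω ∂P
      = -2 * ∫ ω, g ω * D ω ∂P := by
    have heq : ∫ ω, (g' ω - g ω) * D ω ∂P
        = (∫ ω, g' ω * D ω ∂P) - ∫ ω, g ω * D ω ∂P := by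
      rw [← integral_sub hg'D_int hgD_int]
      exact integral_congr_ae (ae_of_all _ fun ω => by ring)
    rw [heq, hBA]; ring
  have hgR_le : ∫ ω, g ω * R ω ∂P ≤ ∫ ω, |R ω| * f ω ^ 2 ∂P := by
    refine integral_mono_ae hgR_int hRf2_int (ae_of_all _ fun ω => ?_)
    calc g ω * R ω ≤ |g ω * R ω| := le_abs_self _
      _ = |R ω| * f ω ^ 2 := by
          simp only [hg_def, abs_mul, abs_abs, abs_mul_abs_self, pow_two]
          all_goals ring
  -- put it all together
  have hmain : 2 * lam * (∫ ω, |f ω| ^ 3 ∂P)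
      ≤ 2 * Real.sqrt σ2 + 1 + 2 * ∫ ω, |R ω| * f ω ^ 2 ∂P := by
    rw [hdiff_eq, hA] at hdiff
    linarith
  have hgoal : (∫ ω, |f ω| ^ 3 ∂P) * lam
      ≤ 8 * qmax + 1 + Real.sqrt σ2 + ∫ ω, |R ω| * f ω ^ 2 ∂P := by
    nlinarith [Real.sqrt_nonneg σ2]
  show (∫ ω, |f ω| ^ 3 ∂P) ≤
      lam⁻¹ * (8 * qmax + 1 + Real.sqrt σ2 + ∫ ω, |R ω| * f ω ^ 2 ∂P)
  rw [inv_mul_eq_div, le_div_iff₀ hlam0]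
  exact hgoal
end

section
/- Let 1 ≤ m ≤ N and 1 ≤ n ≤ N with m ≤ N, and let W have the hypergeometric distribution Hyp(m, n, N). Define S(w) = (m − w)(n − w)/(m(N − m + 1)). Then Var S(W) ≤ n m (m + n)² (N − n)(N − m) / (m²(N − m + 1)²(N − 1)N²). -/
open MeasureTheory ProbabilityTheory

/-- Point probabilities of the hypergeometric distribution `Hyp(m, n, N)`. -/
noncomputable def hypPMF (m n N : ℕ) (k : ℤ) : ℝ :=
  if 0 ≤ k ∧ k ≤ (m : ℤ) then
    (n.choose k.toNat : ℝ) * ((N - n).choose (m - k.toNat)) / (N.choose m)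
  else 0

open Finset


lemma hyp_vandermonde (N n m : ℕ) (hn : n ≤ N) :
    ∑ k ∈ range (m + 1), n.choose k * (N - n).choose (m - k) = N.choose m := by
  have hN : n + (N - n) = N := by omega
  conv_rhs => rw [← hN]
  rw [Nat.add_choose_eq, Finset.Nat.sum_antidiagonal_eq_sum_range_succ_mk]

lemma hyp_moment1 (N n m : ℕ) (hn : 1 ≤ n) (hnN : n ≤ N) (hm : 1 ≤ m) :
    ∑ k ∈ range (m + 1), k * (n.choose k * (N - n).choose (m - k))
      = n * (N - 1).choose (m - 1) := by
  obtain ⟨a, rfl⟩ : ∃ a, n = a + 1 := ⟨n - 1, by omega⟩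
  obtain ⟨b, rfl⟩ : ∃ b, N = b + 1 := ⟨N - 1, by omega⟩
  obtain ⟨c, rfl⟩ : ∃ c, m = c + 1 := ⟨m - 1, by omega⟩
  have hab : a ≤ b := by omega
  rw [Finset.sum_range_succ']
  simp only [Nat.add_sub_add_right, Nat.add_sub_cancel, Nat.zero_mul, zero_mul, add_zero]
  rw [show (a + 1) * (b.choose c) = ∑ i ∈ range (c + 1), (a + 1) * (a.choose i * (b - a).choose (c - i)) by
    rw [← Finset.mul_sum, hyp_vandermonde b a c hab]]
  refine Finset.sum_congr rfl fun i _ => ?_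
  have h1 : (a + 1) * a.choose i = (a + 1).choose (i + 1) * (i + 1) := Nat.add_one_mul_choose_eq a i
  calc (i + 1) * ((a + 1).choose (i + 1) * (b - a).choose (c - i))
      = ((a + 1).choose (i + 1) * (i + 1)) * (b - a).choose (c - i) := by ring
    _ = ((a + 1) * a.choose i) * (b - a).choose (c - i) := by rw [h1]
    _ = (a + 1) * (a.choose i * (b - a).choose (c - i)) := by ring

lemma hyp_moment2 (N n m : ℕ) (hn : 1 ≤ n) (hnN : n ≤ N) (hm : 2 ≤ m) :
    ∑ k ∈ range (m + 1), (k * (k - 1)) * (n.choose k * (N - n).choose (m - k))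
      = (n * (n - 1)) * (N - 2).choose (m - 2) := by
  rcases Nat.lt_or_ge n 2 with h2 | h2
  · have hn1 : n = 1 := by omega
    subst hn1
    rw [Finset.sum_eq_zero]
    · simp
    · intro k hk
      match k with
      | 0 => simp
      | 1 => simp
      | (j + 2) =>
        have h0 : Nat.choose 1 (j + 2) = 0 := Nat.choose_eq_zero_of_lt (by omega)
        simp [h0]
  · obtain ⟨a, rfl⟩ : ∃ a, n = a + 2 := ⟨n - 2, by omega⟩
    obtain ⟨b, rfl⟩ : ∃ b, N = b + 2 := ⟨N - 2, by omega⟩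
    obtain ⟨c, rfl⟩ : ∃ c, m = c + 2 := ⟨m - 2, by omega⟩
    have hab : a ≤ b := by omega
    rw [Finset.sum_range_succ', Finset.sum_range_succ']
    simp only [Nat.add_sub_add_right, Nat.add_sub_cancel, Nat.zero_mul, zero_mul, mul_zero,
      add_zero, Nat.mul_zero, show a + 2 - 1 = a + 1 from rfl, show ∀ x : ℕ, x + 1 + 1 = x + 2 from fun x => rfl]
    rw [show ((a + 2) * (a + 1)) * (b.choose c)
          = ∑ i ∈ range (c + 1), ((a + 2) * (a + 1)) * (a.choose i * (b - a).choose (c - i)) by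
      rw [← Finset.mul_sum, hyp_vandermonde b a c hab]]
    refine Finset.sum_congr rfl fun i _ => ?_
    have h1 : (a + 2) * (a + 1).choose (i + 1) = (a + 2).choose (i + 2) * (i + 2) :=
      Nat.add_one_mul_choose_eq (a + 1) (i + 1)
    have h0 : (a + 1) * a.choose i = (a + 1).choose (i + 1) * (i + 1) := Nat.add_one_mul_choose_eq a i
    calc ((i + 2) * (i + 1)) * ((a + 2).choose (i + 2) * (b - a).choose (c - i))
        = (i + 1) * (((a + 2).choose (i + 2) * (i + 2)) * (b - a).choose (c - i)) := by ring
      _ = (i + 1) * (((a + 2) * (a + 1).choose (i + 1)) * (b - a).choose (c - i)) := by rw [h1]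
      _ = (a + 2) * (((a + 1).choose (i + 1) * (i + 1)) * (b - a).choose (c - i)) := by ring
      _ = (a + 2) * (((a + 1) * a.choose i) * (b - a).choose (c - i)) := by rw [h0]
      _ = ((a + 2) * (a + 1)) * (a.choose i * (b - a).choose (c - i)) := by ring

lemma choose_mul_one (N m : ℕ) (hN : 1 ≤ N) (hm : 1 ≤ m) :
    N * (N - 1).choose (m - 1) = N.choose m * m := by
  obtain ⟨b, rfl⟩ : ∃ b, N = b + 1 := ⟨N - 1, by omega⟩
  obtain ⟨c, rfl⟩ : ∃ c, m = c + 1 := ⟨m - 1, by omega⟩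
  simpa using Nat.add_one_mul_choose_eq b c

lemma choose_mul_two (N m : ℕ) (hN : 2 ≤ N) (hm : 2 ≤ m) :
    (N * (N - 1)) * (N - 2).choose (m - 2) = N.choose m * (m * (m - 1)) := by
  obtain ⟨b, rfl⟩ : ∃ b, N = b + 2 := ⟨N - 2, by omega⟩
  obtain ⟨c, rfl⟩ : ∃ c, m = c + 2 := ⟨m - 2, by omega⟩
  simp only [Nat.add_sub_add_right, Nat.add_sub_cancel]
  have h1 : (b + 2) * (b + 1).choose (c + 1) = (b + 2).choose (c + 2) * (c + 2) :=
    Nat.add_one_mul_choose_eq (b + 1) (c + 1)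
  have h0 : (b + 1) * b.choose c = (b + 1).choose (c + 1) * (c + 1) := Nat.add_one_mul_choose_eq b c
  calc ((b + 2) * (b + 1)) * b.choose c = (b + 2) * ((b + 1) * b.choose c) := by ring
    _ = (b + 2) * ((b + 1).choose (c + 1) * (c + 1)) := by rw [h0]
    _ = ((b + 2) * (b + 1).choose (c + 1)) * (c + 1) := by ring
    _ = ((b + 2).choose (c + 2) * (c + 2)) * (c + 1) := by rw [h1]
    _ = (b + 2).choose (c + 2) * ((c + 2) * (c + 1)) := by ring


lemma hypPMF_nonneg (m n N : ℕ) (k : ℤ) : 0 ≤ hypPMF m n N k := by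
  unfold hypPMF
  split
  · positivity
  · exact le_rfl

lemma hypPMF_nat (m n N : ℕ) (k : ℕ) (hk : k ≤ m) :
    hypPMF m n N (k : ℤ)
      = ((n.choose k * (N - n).choose (m - k) : ℕ) : ℝ) / ((N.choose m : ℕ) : ℝ) := by
  unfold hypPMF
  rw [if_pos ⟨Int.natCast_nonneg k, by exact_mod_cast hk⟩]
  simp only [Int.toNat_natCast]
  push_cast
  ring

lemma hyp_sum_pmf_one (N m n : ℕ) (hmN : m ≤ N) (hnN : n ≤ N) :
    ∑ k ∈ range (m + 1), hypPMF m n N (k : ℤ) = 1 := by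
  have hc : ((N.choose m : ℕ) : ℝ) ≠ 0 := by
    exact_mod_cast (Nat.choose_pos hmN).ne'
  rw [Finset.sum_congr rfl fun k hk => hypPMF_nat m n N k (by simpa using Nat.lt_succ_iff.mp (mem_range.mp hk)),
    ← Finset.sum_div]
  rw [← Nat.cast_sum, hyp_vandermonde N n m hnN, div_self hc]

lemma hyp_master {Ω : Type*} [MeasurableSpace Ω] (P : Measure Ω) [IsProbabilityMeasure P]
    (N m n : ℕ) (hmN : m ≤ N) (hnN : n ≤ N)
    (W : Ω → ℤ) (hW : Measurable W)
    (hlaw : ∀ k : ℤ, P {ω | W ω = k} = ENNReal.ofReal (hypPMF m n N k))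
    (f : ℤ → ℝ) :
    MemLp (fun ω => f (W ω)) 2 P ∧
      ∫ ω, f (W ω) ∂P = ∑ k ∈ range (m + 1), hypPMF m n N (k : ℤ) * f (k : ℤ) := by
  classical
  set A : ℕ → Set Ω := fun k => {ω | W ω = (k : ℤ)} with hA_def
  have hAmeas : ∀ k : ℕ, MeasurableSet (A k) := fun k => hW (measurableSet_singleton ((k : ℕ) : ℤ))
  have hdisj : (↑(range (m + 1)) : Set ℕ).PairwiseDisjoint A := by
    intro i _ j _ hij
    simp only [Function.onFun, Set.disjoint_left]
    intro ω hi hj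
    exact hij (by exact_mod_cast hi.symm.trans (hj : W ω = (j : ℤ)))
  have hPU : P (⋃ k ∈ range (m + 1), A k) = 1 := by
    rw [measure_biUnion_finset hdisj fun k _ => hAmeas k]
    have : ∀ k ∈ range (m + 1), P (A k) = ENNReal.ofReal (hypPMF m n N (k : ℤ)) :=
      fun k _ => hlaw _
    rw [Finset.sum_congr rfl this, ← ENNReal.ofReal_sum_of_nonneg fun k _ => hypPMF_nonneg m n N _,
      hyp_sum_pmf_one N m n hmN hnN, ENNReal.ofReal_one]
  have hae : ∀ᵐ ω ∂P, ω ∈ ⋃ k ∈ range (m + 1), A k := by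
    have hm' : MeasurableSet (⋃ k ∈ range (m + 1), A k) :=
      MeasurableSet.biUnion (Finset.countable_toSet _) fun k _ => hAmeas k
    rw [ae_iff]
    have := prob_compl_eq_zero_iff hm' |>.mpr hPU
    simpa [Set.compl_def] using this
  set F : Ω → ℝ := fun ω => ∑ k ∈ range (m + 1), (A k).indicator (fun _ => f (k : ℤ)) ω with hF_def
  have haeeq : (fun ω => f (W ω)) =ᵐ[P] F := by
    filter_upwards [hae] with ω hω
    simp only [Set.mem_iUnion, exists_prop, mem_coe] at hω
    obtain ⟨k0, hk0mem, hk0⟩ := hω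
    have hk0' : W ω = (k0 : ℤ) := hk0
    rw [hF_def]
    simp only [Set.indicator_apply, hA_def, Set.mem_setOf_eq, hk0']
    rw [Finset.sum_eq_single k0]
    · simp
    · intro b _ hb
      rw [if_neg (by exact_mod_cast (Ne.symm hb))]
    · intro h; exact absurd hk0mem h
  have hFmem : MemLp F 2 P := by
    exact memLp_finset_sum (range (m + 1)) fun k _ => MemLp.indicator (hAmeas k) (memLp_const (μ := P) (f (k : ℤ)))
  constructor
  · exact hFmem.ae_eq haeeq.symm
  · rw [integral_congr_ae haeeq, hF_def]
    rw [integral_finset_sum (range (m + 1))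
      (fun k _ => Integrable.indicator (integrable_const (f (k : ℤ))) (hAmeas k))]
    refine Finset.sum_congr rfl fun k _ => ?_
    rw [integral_indicator_const _ (hAmeas k), measureReal_def, hlaw, smul_eq_mul,
      ENNReal.toReal_ofReal (hypPMF_nonneg m n N _)]

lemma hyp_sum_mul (N m n : ℕ) (hmN : m ≤ N) (t : ℕ → ℕ) :
    ∑ k ∈ range (m + 1), hypPMF m n N (k : ℤ) * (t k : ℝ)
      = ((∑ k ∈ range (m + 1), t k * (n.choose k * (N - n).choose (m - k)) : ℕ) : ℝ)
          / ((N.choose m : ℕ) : ℝ) := by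
  rw [Nat.cast_sum, Finset.sum_div]
  refine Finset.sum_congr rfl fun k hk => ?_
  have hk2 : k ≤ m := by simpa using Nat.lt_succ_iff.mp (mem_range.mp hk)
  rw [hypPMF_nat m n N k hk2]
  push_cast
  ring

lemma hyp_sum_pmf_mul_id (N m n : ℕ) (hm : 1 ≤ m) (hmN : m ≤ N) (hn : 1 ≤ n) (hnN : n ≤ N) :
    ∑ k ∈ range (m + 1), hypPMF m n N (k : ℤ) * (k : ℝ) = (m : ℝ) * n / N := by
  have hc : ((N.choose m : ℕ) : ℝ) ≠ 0 := by exact_mod_cast (Nat.choose_pos hmN).ne'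
  have hN0 : (N : ℝ) ≠ 0 := by exact_mod_cast (by omega : N ≠ 0)
  have h := hyp_sum_mul N m n hmN (fun k => k)
  rw [h, hyp_moment1 N n m hn hnN hm, div_eq_div_iff hc hN0]
  have key : ((N : ℝ)) * ((N - 1).choose (m - 1) : ℕ) = ((N.choose m : ℕ) : ℝ) * m := by
    exact_mod_cast choose_mul_one N m (by omega) hm
  push_cast
  linear_combination (n : ℝ) * key

lemma cast_mul_pred (k : ℕ) : ((k * (k - 1) : ℕ) : ℝ) = (k : ℝ) * ((k : ℝ) - 1) := by
  cases k with
  | zero => simp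
  | succ j => push_cast [Nat.add_sub_cancel]; ring

lemma hyp_sum_pmf_mul_sq (N m n : ℕ) (hm : 1 ≤ m) (hmN : m ≤ N) (hn : 1 ≤ n) (hnN : n ≤ N)
    (hN2 : 2 ≤ N) :
    ∑ k ∈ range (m + 1), hypPMF m n N (k : ℤ) * ((k : ℝ) * ((k : ℝ) - 1))
      = ((m : ℝ) * ((m : ℝ) - 1) * n * ((n : ℝ) - 1)) / ((N : ℝ) * ((N : ℝ) - 1)) := by
  have hc : ((N.choose m : ℕ) : ℝ) ≠ 0 := by exact_mod_cast (Nat.choose_pos hmN).ne'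
  have hden : (N : ℝ) * ((N : ℝ) - 1) ≠ 0 := by
    have h2 : (2 : ℝ) ≤ (N : ℝ) := by exact_mod_cast hN2
    exact mul_ne_zero (by linarith) (by linarith)
  rcases Nat.lt_or_ge m 2 with h2 | h2
  · have hm1 : m = 1 := by omega
    subst hm1
    rw [Finset.sum_range_succ, Finset.sum_range_succ, Finset.sum_range_zero]
    norm_num
  · have h := hyp_sum_mul N m n hmN (fun k => k * (k - 1))
    rw [show (∑ k ∈ range (m + 1), hypPMF m n N (k : ℤ) * ((k : ℝ) * ((k : ℝ) - 1)))
        = ∑ k ∈ range (m + 1), hypPMF m n N (k : ℤ) * ((k * (k - 1) : ℕ) : ℝ) from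
      Finset.sum_congr rfl fun k _ => by rw [cast_mul_pred]]
    rw [h, hyp_moment2 N n m hn hnN h2, div_eq_div_iff hc hden]
    have key : ((N : ℝ) * ((N : ℝ) - 1)) * (((N - 2).choose (m - 2) : ℕ) : ℝ)
        = ((N.choose m : ℕ) : ℝ) * ((m : ℝ) * ((m : ℝ) - 1)) := by
      have h0 := choose_mul_two N m hN2 h2
      have h1 := congrArg (Nat.cast (R := ℝ)) h0
      push_cast [Nat.cast_sub (by omega : 1 ≤ N), Nat.cast_sub (by omega : 1 ≤ m)] at h1
      linear_combination h1
    push_cast [Nat.cast_sub (by omega : 1 ≤ n)]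
    linear_combination ((n : ℝ) * ((n : ℝ) - 1)) * key

set_option maxHeartbeats 1000000 in
/-- Variance bound (4.1) for `S(W) = (m - W)(n - W)/(m(N - m + 1))` when `W` is
hypergeometrically distributed. -/
theorem hypergeometric_var_S_bound
    {Ω : Type*} [MeasurableSpace Ω] (P : Measure Ω) [IsProbabilityMeasure P]
    (N m n : ℕ) (hm : 1 ≤ m) (hmN : m ≤ N) (hn : 1 ≤ n) (hnN : n ≤ N)
    (W : Ω → ℤ) (hW : Measurable W)
    (hlaw : ∀ k : ℤ, P {ω | W ω = k} = ENNReal.ofReal (hypPMF m n N k)) :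
    variance (fun ω => ((m : ℝ) - W ω) * ((n : ℝ) - W ω) / (m * ((N : ℝ) - m + 1))) P ≤
      (n : ℝ) * m * ((m : ℝ) + n) ^ 2 * ((N : ℝ) - n) * ((N : ℝ) - m) /
        ((m : ℝ) ^ 2 * ((N : ℝ) - m + 1) ^ 2 * ((N : ℝ) - 1) * (N : ℝ) ^ 2) := by
  classical
  have hNpos : (0 : ℝ) < N := by exact_mod_cast (by omega : 0 < N)
  have hmRpos : (0 : ℝ) < m := by exact_mod_cast hm
  have hmNR : (m : ℝ) ≤ N := by exact_mod_cast hmN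
  have hnNR : (n : ℝ) ≤ N := by exact_mod_cast hnN
  have hnRpos : (0 : ℝ) < n := by exact_mod_cast hn
  have hDpos : (0 : ℝ) < (m : ℝ) * ((N : ℝ) - m + 1) := by
    apply mul_pos hmRpos; linarith
  set gZ : ℤ → ℝ := fun z => ((m : ℝ) - (z : ℝ)) * ((n : ℝ) - (z : ℝ)) /
      ((m : ℝ) * ((N : ℝ) - m + 1)) with hgZ_def
  have hgZm : Measurable gZ := measurable_from_top
  have hXmeas : Measurable fun ω => gZ (W ω) := hgZm.comp hW
  rcases Nat.lt_or_ge N 2 with hN1 | hN2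
  · -- degenerate case N = 1, m = n = 1
    have hN : N = 1 := by omega
    have hm1 : m = 1 := by omega
    have hn1 : n = 1 := by omega
    subst hN hm1 hn1
    have hP1 : P {ω | W ω = 1} = 1 := by
      rw [hlaw 1]
      norm_num [hypPMF]
    have haeW : ∀ᵐ ω ∂P, W ω = 1 := by
      have hms : MeasurableSet {ω | W ω = 1} := hW (measurableSet_singleton 1)
      rw [ae_iff]
      have := (prob_compl_eq_zero_iff hms).mpr hP1
      simpa [Set.compl_def] using this
    have hzero : (fun ω => gZ (W ω)) =ᵐ[P] fun _ => (0 : ℝ) := by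
      filter_upwards [haeW] with ω hω
      simp [hgZ_def, hω]
    have h1 : variance (fun ω => gZ (W ω)) P ≤ ∫ ω, (gZ (W ω)) ^ 2 ∂P := by
      simpa using variance_le_expectation_sq (X := fun ω => gZ (W ω))
        hXmeas.aestronglyMeasurable
    have h2 : ∫ ω, (gZ (W ω)) ^ 2 ∂P = 0 := by
      rw [integral_congr_ae (g := fun _ => (0 : ℝ))
        (by filter_upwards [hzero] with ω hω; rw [hω]; ring)]
      simp
    have h3 : variance (fun ω => gZ (W ω)) P ≤ 0 := by rw [← h2]; exact h1
    refine le_trans h3 ?_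
    norm_num
  · -- main case N ≥ 2
    have hN2R : (2 : ℝ) ≤ N := by exact_mod_cast hN2
    set μ0 : ℝ := (m : ℝ) * n / N with hμ0_def
    set c0 : ℝ := ((m : ℝ) - μ0) * ((n : ℝ) - μ0) / ((m : ℝ) * ((N : ℝ) - m + 1)) with hc0_def
    obtain ⟨hmemS, hintS⟩ := hyp_master P N m n hmN hnN W hW hlaw gZ
    obtain ⟨hmemT, hintT⟩ := hyp_master P N m n hmN hnN W hW hlaw (fun z => (gZ z - c0) ^ 2)
    set X : Ω → ℝ := fun ω => gZ (W ω) with hX_def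
    have hintX : Integrable X P := hmemS.integrable one_le_two
    have hintX2 : Integrable (fun ω => X ω ^ 2) P := hmemS.integrable_sq
    have hvd : variance X P = (∫ ω, X ω ^ 2 ∂P) - (∫ ω, X ω ∂P) ^ 2 := by
      rw [variance_eq_sub hmemS]
      rfl
    have hexp : ∫ ω, (X ω - c0) ^ 2 ∂P
        = (∫ ω, X ω ^ 2 ∂P) - 2 * c0 * (∫ ω, X ω ∂P) + c0 ^ 2 := by
      calc ∫ ω, (X ω - c0) ^ 2 ∂P
          = ∫ ω, (X ω ^ 2 - 2 * c0 * X ω + c0 ^ 2) ∂P := by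
            congr 1; funext ω; ring
        _ = (∫ ω, X ω ^ 2 ∂P) - 2 * c0 * (∫ ω, X ω ∂P) + c0 ^ 2 := by
            have e1 : ∫ ω, (X ω ^ 2 - 2 * c0 * X ω + c0 ^ 2) ∂P
                = (∫ ω, (X ω ^ 2 - 2 * c0 * X ω) ∂P) + ∫ _ω, (c0 ^ 2 : ℝ) ∂P :=
              integral_add (hintX2.sub (hintX.const_mul (2 * c0))) (integrable_const _)
            have e2 : ∫ ω, (X ω ^ 2 - 2 * c0 * X ω) ∂P
                = (∫ ω, X ω ^ 2 ∂P) - ∫ ω, 2 * c0 * X ω ∂P :=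
              integral_sub hintX2 (hintX.const_mul (2 * c0))
            have e3 : ∫ ω, 2 * c0 * X ω ∂P = 2 * c0 * ∫ ω, X ω ∂P := integral_const_mul _ _
            have e4 : ∫ _ω, (c0 ^ 2 : ℝ) ∂P = c0 ^ 2 := by simp
            rw [e1, e2, e3, e4]
    have step1 : variance X P ≤ ∫ ω, (X ω - c0) ^ 2 ∂P := by
      rw [hvd, hexp]
      nlinarith [sq_nonneg ((∫ ω, X ω ∂P) - c0)]
    have hintT' : ∫ ω, (X ω - c0) ^ 2 ∂P
        = ∑ k ∈ range (m + 1), hypPMF m n N (k : ℤ) * (gZ (k : ℤ) - c0) ^ 2 := hintT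
    -- termwise bound
    have hμ0nn : 0 ≤ μ0 := by
      rw [hμ0_def]; positivity
    have hμ0m : μ0 ≤ m := by
      rw [hμ0_def, div_le_iff₀ hNpos]
      nlinarith
    have key : ∀ k ∈ range (m + 1),
        hypPMF m n N (k : ℤ) * (gZ (k : ℤ) - c0) ^ 2
          ≤ hypPMF m n N (k : ℤ) *
            ((((m : ℝ) + n) ^ 2 * ((k : ℝ) - μ0) ^ 2) / ((m : ℝ) * ((N : ℝ) - m + 1)) ^ 2) := by
      intro k hk
      have hkm : (k : ℝ) ≤ m := by
        exact_mod_cast Nat.lt_succ_iff.mp (mem_range.mp hk)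
      have hk0 : (0 : ℝ) ≤ (k : ℝ) := by positivity
      refine mul_le_mul_of_nonneg_left ?_ (hypPMF_nonneg m n N _)
      have hdiff : gZ (k : ℤ) - c0
          = (((k : ℝ) - μ0) * (((k : ℝ) + μ0) - ((m : ℝ) + n))) /
              ((m : ℝ) * ((N : ℝ) - m + 1)) := by
        rw [hgZ_def, hc0_def]
        push_cast
        field_simp
        ring
      rw [hdiff, div_pow]
      have h1 : 0 ≤ 2 * ((m : ℝ) + n) - ((k : ℝ) + μ0) := by linarith
      have h2 : 0 ≤ (k : ℝ) + μ0 := by linarith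
      have hnum : (((k : ℝ) - μ0) * (((k : ℝ) + μ0) - ((m : ℝ) + n))) ^ 2
          ≤ ((m : ℝ) + n) ^ 2 * ((k : ℝ) - μ0) ^ 2 := by
        nlinarith [mul_nonneg (mul_nonneg h1 h2) (sq_nonneg ((k : ℝ) - μ0))]
      have hd2 : (0 : ℝ) < ((m : ℝ) * ((N : ℝ) - m + 1)) ^ 2 := by positivity
      exact div_le_div_of_nonneg_right hnum hd2.le |>.trans_eq rfl
    have step2 : ∑ k ∈ range (m + 1), hypPMF m n N (k : ℤ) * (gZ (k : ℤ) - c0) ^ 2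
        ≤ ((m : ℝ) + n) ^ 2 / ((m : ℝ) * ((N : ℝ) - m + 1)) ^ 2 *
            ∑ k ∈ range (m + 1), hypPMF m n N (k : ℤ) * ((k : ℝ) - μ0) ^ 2 := by
      refine le_trans (Finset.sum_le_sum key) ?_
      rw [Finset.mul_sum]
      exact le_of_eq (Finset.sum_congr rfl fun k _ => by ring)
    have hsum : ∑ k ∈ range (m + 1), hypPMF m n N (k : ℤ) * ((k : ℝ) - μ0) ^ 2
        = (m : ℝ) * n * ((N : ℝ) - n) * ((N : ℝ) - m) / (((N : ℝ) - 1) * (N : ℝ) ^ 2) := by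
      have hexpand : ∀ k : ℕ, ((k : ℝ) - μ0) ^ 2
          = (k : ℝ) * ((k : ℝ) - 1) + (1 - 2 * μ0) * (k : ℝ) + μ0 ^ 2 := by
        intro k; ring
      calc ∑ k ∈ range (m + 1), hypPMF m n N (k : ℤ) * ((k : ℝ) - μ0) ^ 2
          = ∑ k ∈ range (m + 1), (hypPMF m n N (k : ℤ) * ((k : ℝ) * ((k : ℝ) - 1))
              + ((1 - 2 * μ0) * (hypPMF m n N (k : ℤ) * (k : ℝ))
              + μ0 ^ 2 * hypPMF m n N (k : ℤ))) := by
            refine Finset.sum_congr rfl fun k _ => ?_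
            rw [hexpand k]; ring
        _ = ((m : ℝ) * ((m : ℝ) - 1) * n * ((n : ℝ) - 1)) / ((N : ℝ) * ((N : ℝ) - 1))
              + ((1 - 2 * μ0) * ((m : ℝ) * n / N) + μ0 ^ 2 * 1) := by
            rw [Finset.sum_add_distrib, Finset.sum_add_distrib, ← Finset.mul_sum, ← Finset.mul_sum,
              hyp_sum_pmf_mul_sq N m n hm hmN hn hnN hN2,
              hyp_sum_pmf_mul_id N m n hm hmN hn hnN,
              hyp_sum_pmf_one N m n hmN hnN]
        _ = (m : ℝ) * n * ((N : ℝ) - n) * ((N : ℝ) - m) / (((N : ℝ) - 1) * (N : ℝ) ^ 2) := by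
            rw [hμ0_def]
            have hN1 : (N : ℝ) - 1 ≠ 0 := by linarith
            have hN0 : (N : ℝ) ≠ 0 := by linarith
            field_simp
            ring
    have final : ((m : ℝ) + n) ^ 2 / ((m : ℝ) * ((N : ℝ) - m + 1)) ^ 2 *
          ((m : ℝ) * n * ((N : ℝ) - n) * ((N : ℝ) - m) / (((N : ℝ) - 1) * (N : ℝ) ^ 2))
        = (n : ℝ) * m * ((m : ℝ) + n) ^ 2 * ((N : ℝ) - n) * ((N : ℝ) - m) /
            ((m : ℝ) ^ 2 * ((N : ℝ) - m + 1) ^ 2 * ((N : ℝ) - 1) * (N : ℝ) ^ 2) := by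
      have hN1 : (N : ℝ) - 1 ≠ 0 := by linarith
      have hN0 : (N : ℝ) ≠ 0 := by linarith
      have hDm : (N : ℝ) - m + 1 ≠ 0 := by linarith
      have hm0 : (m : ℝ) ≠ 0 := by linarith
      field_simp
    calc variance X P ≤ ∫ ω, (X ω - c0) ^ 2 ∂P := step1
      _ = ∑ k ∈ range (m + 1), hypPMF m n N (k : ℤ) * (gZ (k : ℤ) - c0) ^ 2 := hintT'
      _ ≤ ((m : ℝ) + n) ^ 2 / ((m : ℝ) * ((N : ℝ) - m + 1)) ^ 2 *
            ∑ k ∈ range (m + 1), hypPMF m n N (k : ℤ) * ((k : ℝ) - μ0) ^ 2 := step2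
      _ = (n : ℝ) * m * ((m : ℝ) + n) ^ 2 * ((N : ℝ) - n) * ((N : ℝ) - m) /
            ((m : ℝ) ^ 2 * ((N : ℝ) - m + 1) ^ 2 * ((N : ℝ) - 1) * (N : ℝ) ^ 2) := by
          rw [hsum, final]
end

section
/- Let n ≥ 2, let B ~ Bi(n, 1/2), let V be B rounded up to the next even integer (V = B if B is even, V = B + 1 if B is odd), and let W = V/2. Then Var W = (n + 1)/16. -/
open MeasureTheory ProbabilityTheory Finset

lemma aux_sum_choose (n : ℕ) :
    2 * ∑ k ∈ Finset.range (n+1), k * n.choose k = n * 2^n := by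
  cases n with
  | zero => simp
  | succ m =>
    rw [Finset.sum_range_succ']
    have h : ∀ j, (j+1) * (m+1).choose (j+1) = (m+1) * m.choose j := by
      intro j
      rw [mul_comm]
      exact (Nat.add_one_mul_choose_eq m j).symm
    rw [Finset.sum_congr rfl fun j _ => h j, ← Finset.mul_sum, Nat.sum_range_choose]
    ring

lemma aux_sum_sq_choose (n : ℕ) :
    4 * ∑ k ∈ Finset.range (n+1), k^2 * n.choose k = n * (n+1) * 2^n := by
  cases n with
  | zero => simp
  | succ m =>
    rw [Finset.sum_range_succ']
    have h : ∀ j, (j+1)^2 * (m+1).choose (j+1)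
        = (m+1) * (j * m.choose j) + (m+1) * m.choose j := by
      intro j
      have hc := Nat.add_one_mul_choose_eq m j
      calc (j+1)^2 * (m+1).choose (j+1) = (j+1) * ((m+1).choose (j+1) * (j+1)) := by ring
        _ = (j+1) * ((m+1) * m.choose j) := by rw [← hc]
        _ = (m+1) * (j * m.choose j) + (m+1) * m.choose j := by ring
    rw [Finset.sum_congr rfl fun j _ => h j, Finset.sum_add_distrib, ← Finset.mul_sum,
      ← Finset.mul_sum, Nat.sum_range_choose]
    have h2 := aux_sum_choose m
    zify at h2 ⊢
    linear_combination (2*(m:ℤ)+2) * h2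

lemma aux_alt_sum_mul (n : ℕ) (hn : 2 ≤ n) :
    ∑ k ∈ Finset.range (n+1), (-1 : ℤ)^k * k * n.choose k = 0 := by
  obtain ⟨m, rfl⟩ : ∃ m, n = m + 2 := ⟨n - 2, by omega⟩
  rw [Finset.sum_range_succ']
  have h : ∀ j ∈ Finset.range (m+2),
      (-1:ℤ)^(j+1) * ((j+1 : ℕ) : ℤ) * ((m+2).choose (j+1) : ℤ)
      = -((m:ℤ)+2) * ((-1)^j * ((m+1).choose j : ℤ)) := by
    intro j _
    have hcnat : (j+1) * (m+2).choose (j+1) = (m+2) * (m+1).choose j := by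
      rw [mul_comm]; exact (Nat.add_one_mul_choose_eq (m+1) j).symm
    have hc : ((j:ℤ)+1) * ((m+2).choose (j+1) : ℤ) = ((m:ℤ)+2) * ((m+1).choose j : ℤ) := by
      exact_mod_cast congrArg (fun x : ℕ => (x : ℤ)) hcnat
    push_cast
    linear_combination ((-1:ℤ)^(j+1)) * hc
  rw [Finset.sum_congr rfl h, ← Finset.mul_sum,
    Int.alternating_sum_range_choose_of_ne (by omega : m + 1 ≠ 0)]
  simp

/-- The variance of `W = V/2`, where `V` is a `Bi(n, 1/2)` random variable rounded up
to the next even integer, equals `(n + 1)/16`. -/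
theorem parity_variance
    {Ω : Type*} [MeasurableSpace Ω] (P : Measure Ω) [IsProbabilityMeasure P]
    (n : ℕ) (hn : 2 ≤ n)
    (B : Ω → ℕ) (hB : Measurable B)
    (hlaw : ∀ k : ℕ, P {ω | B ω = k} = ENNReal.ofReal ((n.choose k : ℝ) / 2 ^ n))
    (V : Ω → ℕ) (hV : ∀ ω, V ω = if Even (B ω) then B ω else B ω + 1) :
    variance (fun ω => (V ω : ℝ) / 2) P = ((n : ℝ) + 1) / 16 := by
  classical
  set f : ℕ → ℝ := fun k => ((if Even k then k else k + 1 : ℕ) : ℝ) / 2 with hf_def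
  have hWf : (fun ω => (V ω : ℝ) / 2) = fun ω => f (B ω) := by
    funext ω; rw [hf_def]; simp only; rw [hV ω]
  set p : ℕ → ℝ := fun k => (n.choose k : ℝ) / 2 ^ n with hp_def
  have hp0 : ∀ k, 0 ≤ p k := fun k => by positivity
  -- the law of B as a sum of Dirac measures
  have hmap : P.map B = ∑ k ∈ Finset.range (n+1), (ENNReal.ofReal (p k)) • Measure.dirac k := by
    apply MeasureTheory.Measure.ext_of_singleton
    intro a
    rw [Measure.map_apply hB (measurableSet_singleton a)]
    have hpre : B ⁻¹' {a} = {ω | B ω = a} := rfl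
    rw [hpre, hlaw a, Measure.finset_sum_apply]
    simp only [Measure.smul_apply, Measure.dirac_apply, Set.indicator_apply,
      Set.mem_singleton_iff, smul_eq_mul, mul_ite, mul_one, mul_zero, Pi.one_apply]
    rw [Finset.sum_ite_eq' (Finset.range (n+1)) a]
    split_ifs with ha
    · rfl
    · have : n.choose a = 0 := Nat.choose_eq_zero_of_lt (by simp at ha; omega)
      simp [this]
  -- integrals of functions of B
  have key : ∀ g : ℕ → ℝ, ∫ ω, g (B ω) ∂P = ∑ k ∈ Finset.range (n+1), p k * g k := by
    intro g
    have hgm : Measurable g := measurable_of_countable g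
    have hint : ∀ k : ℕ, Integrable g (Measure.dirac k) := by
      intro k
      refine ⟨hgm.aestronglyMeasurable, ?_⟩
      rw [MeasureTheory.HasFiniteIntegral,
        lintegral_dirac' k (measurable_of_countable fun a => (‖g a‖ₑ : ENNReal))]
      exact enorm_lt_top
    rw [← MeasureTheory.integral_map hB.aemeasurable hgm.aestronglyMeasurable, hmap,
      MeasureTheory.integral_finset_sum_measure
        (fun k _ => (hint k).smul_measure ENNReal.ofReal_ne_top)]
    refine Finset.sum_congr rfl fun k _ => ?_
    rw [integral_smul_measure, integral_dirac, ENNReal.toReal_ofReal (hp0 k), smul_eq_mul]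
  -- a.e. bound on B
  have hae : ∀ᵐ ω ∂P, B ω ≤ n := by
    rw [ae_iff]
    have hsub : {ω | ¬ B ω ≤ n} ⊆ ⋃ k : ℕ, {ω | B ω = n + 1 + k} := by
      intro ω h
      simp only [Set.mem_setOf_eq, not_le] at h
      exact Set.mem_iUnion.2 ⟨B ω - (n+1), by simp only [Set.mem_setOf_eq]; omega⟩
    refine measure_mono_null hsub (measure_iUnion_null fun k => ?_)
    rw [hlaw]
    rw [Nat.choose_eq_zero_of_lt (by omega)]
    simp
  -- Memℒp
  have hWmeas : Measurable fun ω => f (B ω) := (measurable_of_countable f).comp hB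
  have hW2 : MemLp (fun ω => f (B ω)) 2 P := by
    refine MemLp.of_bound hWmeas.aestronglyMeasurable ((n : ℝ) + 1) ?_
    filter_upwards [hae] with ω h
    rw [Real.norm_eq_abs, abs_of_nonneg (by positivity)]
    rw [hf_def]
    simp only
    have hb : (B ω : ℝ) ≤ n := Nat.cast_le.mpr h
    split_ifs <;> · push_cast; linarith
  -- basic binomial sums over ℝ
  have hA : ∑ k ∈ Finset.range (n+1), (n.choose k : ℝ) = 2^n := by
    exact_mod_cast congrArg (fun x : ℕ => (x : ℝ)) (Nat.sum_range_choose n)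
  have hBsum : (2:ℝ) * ∑ k ∈ Finset.range (n+1), (k : ℝ) * (n.choose k : ℝ) = n * 2^n := by
    exact_mod_cast congrArg (fun x : ℕ => (x : ℝ)) (aux_sum_choose n)
  have hCsum : (4:ℝ) * ∑ k ∈ Finset.range (n+1), (k : ℝ)^2 * (n.choose k : ℝ)
      = n * (n+1) * 2^n := by
    exact_mod_cast congrArg (fun x : ℕ => (x : ℝ)) (aux_sum_sq_choose n)
  have hD : ∑ k ∈ Finset.range (n+1), (-1:ℝ)^k * (n.choose k : ℝ) = 0 := by
    exact_mod_cast congrArg (fun x : ℤ => (x : ℝ))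
      (Int.alternating_sum_range_choose_of_ne (by omega : n ≠ 0))
  have hE : ∑ k ∈ Finset.range (n+1), (-1:ℝ)^k * (k : ℝ) * (n.choose k : ℝ) = 0 := by
    exact_mod_cast congrArg (fun x : ℤ => (x : ℝ)) (aux_alt_sum_mul n hn)
  -- pointwise formulas for f
  have hf4 : ∀ k : ℕ, f k = (2*(k:ℝ) + 1 - (-1:ℝ)^k) / 4 := by
    intro k
    rcases Nat.even_or_odd k with h | h
    · rw [hf_def]; simp only; rw [if_pos h, h.neg_one_pow]; push_cast; ring
    · rw [hf_def]; simp only; rw [if_neg (Nat.not_even_iff_odd.mpr h), h.neg_one_pow]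
      push_cast; ring
  -- first moment
  have hM1 : ∫ ω, f (B ω) ∂P = ((n:ℝ) + 1) / 4 := by
    rw [key f]
    have step : ∀ k ∈ Finset.range (n+1), p k * f k
        = (2*((k:ℝ) * (n.choose k : ℝ)) + (n.choose k : ℝ)
            - (-1:ℝ)^k * (n.choose k : ℝ)) / 4 / 2^n := by
      intro k _
      rw [hf4 k, hp_def]
      ring
    rw [Finset.sum_congr rfl step]
    rw [← Finset.sum_div, ← Finset.sum_div, Finset.sum_sub_distrib, Finset.sum_add_distrib,
      ← Finset.mul_sum, hA, hD]
    rw [div_div, div_eq_div_iff (by positivity) (by norm_num : (4:ℝ) ≠ 0)]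
    linear_combination (4:ℝ) * hBsum
  -- second moment
  have hM2 : ∫ ω, (f (B ω))^2 ∂P = ((n:ℝ) + 1) * ((n:ℝ) + 2) / 16 := by
    have keysq := key (fun k => (f k)^2)
    rw [keysq]
    have step : ∀ k ∈ Finset.range (n+1), p k * (f k)^2
        = (4*((k:ℝ)^2 * (n.choose k : ℝ)) + 4*((k:ℝ) * (n.choose k : ℝ))
            + 2*(n.choose k : ℝ) - 4*((-1:ℝ)^k * (k:ℝ) * (n.choose k : ℝ))
            - 2*((-1:ℝ)^k * (n.choose k : ℝ))) / 16 / 2^n := by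
      intro k _
      have hsq : (f k)^2 = (4*(k:ℝ)^2 + 4*(k:ℝ) + 2 - (4*(k:ℝ)+2) * (-1:ℝ)^k) / 16 := by
        rw [hf4 k]
        have : ((-1:ℝ)^k)^2 = 1 := by
          rcases Nat.even_or_odd k with h | h
          · rw [h.neg_one_pow]; norm_num
          · rw [h.neg_one_pow]; norm_num
        nlinarith [this]
      rw [hsq, hp_def]
      ring
    rw [Finset.sum_congr rfl step]
    rw [← Finset.sum_div, ← Finset.sum_div, Finset.sum_sub_distrib, Finset.sum_sub_distrib,
      Finset.sum_add_distrib, Finset.sum_add_distrib, ← Finset.mul_sum, ← Finset.mul_sum,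
      ← Finset.mul_sum, ← Finset.mul_sum, ← Finset.mul_sum, hA, hD, hE]
    rw [div_div, div_eq_div_iff (by positivity) (by norm_num : (16:ℝ) ≠ 0)]
    linear_combination (16:ℝ) * hCsum + (32:ℝ) * hBsum
  -- conclude
  rw [hWf, ProbabilityTheory.variance_eq_sub hW2]
  have hpow : (fun ω => f (B ω)) ^ 2 = fun ω => (f (B ω))^2 := by
    funext ω; simp [pow_two]
  rw [hpow, hM2, hM1]
  ring
end

section
/- Let (W, W') be an exchangeable pair of integer-valued random variables with E W = μ and Var W = σ² < ∞, suppose there exist 0 < λ < 1 and a random variable R with E[W' − μ | W] = (1 − λ)(W − μ) + R almost surely, and W' − W ∈ {−1, 0, +1} almost surely. Set S = P[W' = W + 1 | W]. Then for every bounded function g : ℤ → ℝ, E[(W − μ) g(W)] = λ^{−1} E[S Δg(W)] + λ^{−1} E[R g(W)], where Δg(k) := g(k + 1) − g(k). -/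
open MeasureTheory ProbabilityTheory

private lemma integral_condexp_mul_aux {Ω : Type*} [inst : MeasurableSpace Ω]
    (P : Measure Ω) [IsProbabilityMeasure P]
    {m : MeasurableSpace Ω} (hm : m ≤ inst)
    {X h : Ω → ℝ} (hX : Integrable X P) (hh : StronglyMeasurable[m] h)
    {C : ℝ} (hC : ∀ ω, |h ω| ≤ C) :
    ∫ ω, h ω * (P[X|m]) ω ∂P = ∫ ω, h ω * X ω ∂P := by
  have hh' : AEStronglyMeasurable[inst] h P := (hh.mono hm).aestronglyMeasurable
  have hint : Integrable (fun ω => h ω * X ω) P :=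
    hX.bdd_mul (c := C) hh' (Filter.Eventually.of_forall fun ω => by simpa using hC ω)
  have h1 : P[fun ω => h ω * X ω|m] =ᵐ[P] fun ω => h ω * (P[X|m]) ω :=
    condExp_mul_of_stronglyMeasurable_left hh hint hX
  calc ∫ ω, h ω * (P[X|m]) ω ∂P
      = ∫ ω, (P[fun ω => h ω * X ω|m]) ω ∂P := (integral_congr_ae h1).symm
    _ = ∫ ω, h ω * X ω ∂P := integral_condExp hm

/-- The Stein identity (3.22): for an exchangeable pair satisfying the linear regression
condition and the unit-jump condition, and for every bounded `g : ℤ → ℝ`,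
`E[(W - μ) g(W)] = λ⁻¹ E[S Δg(W)] + λ⁻¹ E[R g(W)]`. -/
theorem stein_identity_exchangeable_pair
    {Ω : Type*} [MeasurableSpace Ω] (P : Measure Ω) [IsProbabilityMeasure P]
    (W W' : Ω → ℤ) (hW : Measurable W) (hW' : Measurable W')
    (μ σ2 : ℝ) (hσ2 : 0 < σ2)
    (hL2 : MemLp (fun ω => (W ω : ℝ)) 2 P)
    (hmean : ∫ ω, (W ω : ℝ) ∂P = μ)
    (hvar : variance (fun ω => (W ω : ℝ)) P = σ2)
    (hexch : Measure.map (fun ω => (W ω, W' ω)) P = Measure.map (fun ω => (W' ω, W ω)) P)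
    (lam : ℝ) (hlam0 : 0 < lam) (hlam1 : lam < 1)
    (R : Ω → ℝ)
    (hcond : P[(fun ω => (W' ω : ℝ) - μ) | MeasurableSpace.comap W ⊤] =ᵐ[P]
      fun ω => (1 - lam) * ((W ω : ℝ) - μ) + R ω)
    (hjump : ∀ᵐ ω ∂P, W' ω - W ω ∈ ({-1, 0, 1} : Set ℤ))
    (S : Ω → ℝ)
    (hS : S = P[Set.indicator {ω | W' ω = W ω + 1} (fun _ => (1 : ℝ)) |
      MeasurableSpace.comap W ⊤]) :
    ∀ g : ℤ → ℝ, (∃ C : ℝ, ∀ k : ℤ, |g k| ≤ C) →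
      ∫ ω, ((W ω : ℝ) - μ) * g (W ω) ∂P =
        lam⁻¹ * (∫ ω, S ω * (g (W ω + 1) - g (W ω)) ∂P) +
          lam⁻¹ * ∫ ω, R ω * g (W ω) ∂P := by
  intro g hg
  obtain ⟨C, hC⟩ := hg
  have hm : MeasurableSpace.comap W ⊤ ≤ ‹MeasurableSpace Ω› := hW.comap_le
  have hWm : Measurable[MeasurableSpace.comap W ⊤] W := fun s _ => ⟨s, trivial, rfl⟩
  have hgWm : StronglyMeasurable[MeasurableSpace.comap W ⊤] (fun ω => g (W ω)) :=
    ((measurable_of_countable g).comp hWm).stronglyMeasurable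
  have hDgm : StronglyMeasurable[MeasurableSpace.comap W ⊤] (fun ω => g (W ω + 1) - g (W ω)) :=
    ((measurable_of_countable (fun k : ℤ => g (k + 1) - g k)).comp hWm).stronglyMeasurable
  -- basic integrability
  have hWint : Integrable (fun ω => (W ω : ℝ)) P := hL2.integrable one_le_two
  have hWμint : Integrable (fun ω => (W ω : ℝ) - μ) P := hWint.sub (integrable_const μ)
  have hmapW' : Measure.map W' P = Measure.map W P := by
    have h1 := congrArg (Measure.map Prod.fst) hexch
    rw [Measure.map_map measurable_fst (hW.prodMk hW'),
      Measure.map_map measurable_fst (hW'.prodMk hW)] at h1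
    exact h1.symm
  have hid : IdentDistrib W' W P P := ⟨hW'.aemeasurable, hW.aemeasurable, hmapW'⟩
  have hidR : IdentDistrib (fun ω => (W' ω : ℝ)) (fun ω => (W ω : ℝ)) P P :=
    hid.comp (measurable_of_countable _)
  have hW'int : Integrable (fun ω => (W' ω : ℝ)) P := hidR.integrable_iff.mpr hWint
  have hW'μint : Integrable (fun ω => (W' ω : ℝ) - μ) P := hW'int.sub (integrable_const μ)
  have hRint : Integrable R P := by
    have h0 : Integrable (fun ω =>
        (P[(fun ω => (W' ω : ℝ) - μ)|MeasurableSpace.comap W ⊤]) ω - (1 - lam) * ((W ω : ℝ) - μ)) P :=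
      integrable_condExp.sub (hWμint.const_mul _)
    refine h0.congr ?_
    filter_upwards [hcond] with ω hω
    rw [hω]; ring
  have hbd : ∃ C', ∀ ω, ‖g (W ω)‖ ≤ C' := ⟨C, fun ω => by simpa using hC (W ω)⟩
  have hbd1 : ∃ C', ∀ ω, ‖g (W ω + 1)‖ ≤ C' := ⟨C, fun ω => by simpa using hC (W ω + 1)⟩
  have hgW_meas : AEStronglyMeasurable (fun ω => g (W ω)) P :=
    (hgWm.mono hm).aestronglyMeasurable
  have hgW1_meas : AEStronglyMeasurable (fun ω => g (W ω + 1)) P :=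
    (((measurable_of_countable (fun k : ℤ => g (k + 1))).comp hWm).stronglyMeasurable.mono
      hm).aestronglyMeasurable
  have hint1 : Integrable (fun ω => ((W ω : ℝ) - μ) * g (W ω)) P :=
    (hWμint.bdd_mul hgW_meas (Filter.Eventually.of_forall hbd.choose_spec)).congr (Filter.Eventually.of_forall fun ω => mul_comm _ _)
  have hintR : Integrable (fun ω => R ω * g (W ω)) P :=
    (hRint.bdd_mul hgW_meas (Filter.Eventually.of_forall hbd.choose_spec)).congr (Filter.Eventually.of_forall fun ω => mul_comm _ _)
  have hDiffint : Integrable (fun ω => ((W' ω - W ω : ℤ) : ℝ)) P :=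
    (hW'int.sub hWint).congr (Filter.Eventually.of_forall fun ω => by
      simp only [Pi.sub_apply]; push_cast; ring)
  have hintD : Integrable (fun ω => ((W' ω - W ω : ℤ) : ℝ) * g (W ω)) P :=
    (hDiffint.bdd_mul hgW_meas (Filter.Eventually.of_forall hbd.choose_spec)).congr (Filter.Eventually.of_forall fun ω => mul_comm _ _)
  -- indicators
  set Ip : Ω → ℝ := Set.indicator {ω | W' ω = W ω + 1} (fun _ => (1 : ℝ)) with hIp_def
  set Im : Ω → ℝ := Set.indicator {ω | W' ω = W ω - 1} (fun _ => (1 : ℝ)) with hIm_def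
  have hsetp : MeasurableSet {ω | W' ω = W ω + 1} := by
    have h0 : {ω | W' ω = W ω + 1} = (fun ω => W' ω - W ω) ⁻¹' {1} := by
      ext ω; simp only [Set.mem_setOf_eq, Set.mem_preimage, Set.mem_singleton_iff]; omega
    rw [h0]; exact (hW'.sub hW) (measurableSet_singleton 1)
  have hsetm : MeasurableSet {ω | W' ω = W ω - 1} := by
    have h0 : {ω | W' ω = W ω - 1} = (fun ω => W' ω - W ω) ⁻¹' {-1} := by
      ext ω; simp only [Set.mem_setOf_eq, Set.mem_preimage, Set.mem_singleton_iff]; omega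
    rw [h0]; exact (hW'.sub hW) (measurableSet_singleton (-1))
  have hIp_int : Integrable Ip P := (integrable_const (1 : ℝ)).indicator hsetp
  have hIm_int : Integrable Im P := (integrable_const (1 : ℝ)).indicator hsetm
  have hintIpg : Integrable (fun ω => Ip ω * g (W ω)) P :=
    (hIp_int.bdd_mul hgW_meas (Filter.Eventually.of_forall hbd.choose_spec)).congr (Filter.Eventually.of_forall fun ω => mul_comm _ _)
  have hintIpg1 : Integrable (fun ω => Ip ω * g (W ω + 1)) P :=
    (hIp_int.bdd_mul hgW1_meas (Filter.Eventually.of_forall hbd1.choose_spec)).congr (Filter.Eventually.of_forall fun ω => mul_comm _ _)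
  have hintImg : Integrable (fun ω => Im ω * g (W ω)) P :=
    (hIm_int.bdd_mul hgW_meas (Filter.Eventually.of_forall hbd.choose_spec)).congr (Filter.Eventually.of_forall fun ω => mul_comm _ _)
  -- Step A: conditional expectation identity
  have keyA : ∫ ω, g (W ω) * ((1 - lam) * ((W ω : ℝ) - μ) + R ω) ∂P
      = ∫ ω, g (W ω) * ((W' ω : ℝ) - μ) ∂P := by
    have h1 := integral_condexp_mul_aux P hm (X := fun ω => (W' ω : ℝ) - μ)
      (h := fun ω => g (W ω)) hW'μint hgWm (C := C) (fun ω => hC (W ω))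
    rw [← h1]
    exact (integral_congr_ae (hcond.mono fun ω hω => by rw [hω])).symm
  have expandL : ∫ ω, g (W ω) * ((1 - lam) * ((W ω : ℝ) - μ) + R ω) ∂P
      = (1 - lam) * ∫ ω, ((W ω : ℝ) - μ) * g (W ω) ∂P + ∫ ω, R ω * g (W ω) ∂P := by
    have h0 : (fun ω => g (W ω) * ((1 - lam) * ((W ω : ℝ) - μ) + R ω))
        = fun ω => (1 - lam) * (((W ω : ℝ) - μ) * g (W ω)) + R ω * g (W ω) := by
      funext ω; ring
    rw [h0, integral_add (hint1.const_mul _) hintR, integral_const_mul]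
  have expandR : ∫ ω, g (W ω) * ((W' ω : ℝ) - μ) ∂P
      = ∫ ω, ((W' ω - W ω : ℤ) : ℝ) * g (W ω) ∂P
        + ∫ ω, ((W ω : ℝ) - μ) * g (W ω) ∂P := by
    rw [← integral_add hintD hint1]
    apply integral_congr_ae
    filter_upwards with ω
    push_cast; ring
  -- Step B: jump condition
  have stepB : ∫ ω, ((W' ω - W ω : ℤ) : ℝ) * g (W ω) ∂P
      = ∫ ω, Ip ω * g (W ω) ∂P - ∫ ω, Im ω * g (W ω) ∂P := by
    rw [← integral_sub hintIpg hintImg]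
    apply integral_congr_ae
    filter_upwards [hjump] with ω hω
    simp only [Set.mem_insert_iff, Set.mem_singleton_iff] at hω
    rw [hIp_def, hIm_def]
    simp only [Set.indicator_apply, Set.mem_setOf_eq]
    rcases hω with h | h | h
    · have e1 : W' ω = W ω - 1 := by omega
      have e2 : ¬ (W' ω = W ω + 1) := by omega
      rw [h, if_neg e2, if_pos e1]
      push_cast; ring
    · have e1 : ¬ (W' ω = W ω - 1) := by omega
      have e2 : ¬ (W' ω = W ω + 1) := by omega
      rw [h, if_neg e2, if_neg e1]
      push_cast; ring
    · have e1 : ¬ (W' ω = W ω - 1) := by omega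
      have e2 : W' ω = W ω + 1 := by omega
      rw [h, if_pos e2, if_neg e1]
      push_cast; ring
  -- Step C: exchangeability
  have stepC : ∫ ω, Im ω * g (W ω) ∂P = ∫ ω, Ip ω * g (W ω + 1) ∂P := by
    set F : ℤ × ℤ → ℝ := fun p => if p.2 = p.1 - 1 then g p.1 else 0 with hF_def
    have hFm : Measurable F := measurable_of_countable F
    have c1 : ∫ ω, Im ω * g (W ω) ∂P
        = ∫ p, F p ∂(Measure.map (fun ω => (W ω, W' ω)) P) := by
      rw [integral_map (hW.prodMk hW').aemeasurable hFm.aestronglyMeasurable]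
      apply integral_congr_ae
      filter_upwards with ω
      rw [hIm_def, hF_def]
      dsimp only
      simp only [Set.indicator_apply, Set.mem_setOf_eq]
      by_cases h : W' ω = W ω - 1
      · rw [if_pos h, if_pos h, one_mul]
      · rw [if_neg h, if_neg h, zero_mul]
    have c3 : ∫ p, F p ∂(Measure.map (fun ω => (W' ω, W ω)) P)
        = ∫ ω, Ip ω * g (W ω + 1) ∂P := by
      rw [integral_map (hW'.prodMk hW).aemeasurable hFm.aestronglyMeasurable]
      apply integral_congr_ae
      filter_upwards with ω
      rw [hIp_def, hF_def]
      dsimp only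
      simp only [Set.indicator_apply, Set.mem_setOf_eq]
      by_cases h : W ω = W' ω - 1
      · have e1 : W' ω = W ω + 1 := by omega
        rw [if_pos h, if_pos e1, one_mul, e1]
      · have e1 : ¬ (W' ω = W ω + 1) := by omega
        rw [if_neg h, if_neg e1, zero_mul]
    rw [c1, hexch, c3]
  -- Step D: tower property
  have hDbound : ∀ ω, |g (W ω + 1) - g (W ω)| ≤ C + C := fun ω =>
    (abs_sub _ _).trans (add_le_add (hC _) (hC _))
  have stepD : ∫ ω, (g (W ω + 1) - g (W ω)) * S ω ∂P
      = ∫ ω, (g (W ω + 1) - g (W ω)) * Ip ω ∂P := by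
    rw [hS]
    exact integral_condexp_mul_aux P hm hIp_int hDgm (C := C + C) hDbound
  have hSplit : ∫ ω, (g (W ω + 1) - g (W ω)) * Ip ω ∂P
      = ∫ ω, Ip ω * g (W ω + 1) ∂P - ∫ ω, Ip ω * g (W ω) ∂P := by
    rw [← integral_sub hintIpg1 hintIpg]
    apply integral_congr_ae
    filter_upwards with ω
    ring
  have hSgoal : ∫ ω, S ω * (g (W ω + 1) - g (W ω)) ∂P
      = ∫ ω, Ip ω * g (W ω + 1) ∂P - ∫ ω, Ip ω * g (W ω) ∂P := by
    rw [← hSplit, ← stepD]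
    apply integral_congr_ae
    filter_upwards with ω
    ring
  -- combine
  have hmain : lam * ∫ ω, ((W ω : ℝ) - μ) * g (W ω) ∂P
      = ∫ ω, S ω * (g (W ω + 1) - g (W ω)) ∂P + ∫ ω, R ω * g (W ω) ∂P := by
    have h1 := keyA
    rw [expandL, expandR, stepB, stepC] at h1
    rw [hSgoal]
    linarith
  have hlamne : lam ≠ 0 := ne_of_gt hlam0
  field_simp
  linarith [hmain]
end
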